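/- arXiv:0903.4373 — 5 statements merged into one kernel-verified Lean document; each statement's English description precedes it below -/
import Mathlib

section
/- For fixed λ > 0, the function g_λ(x) = 1 − Γ(x+1,λ)/Γ(x+1) is strictly decreasing on (0,∞). -/
open Real MeasureTheory Set

/-- Upper incomplete gamma function `Γ(a, x) = ∫_x^∞ t^(a-1) e^(-t) dt`. -/
noncomputable def upperGamma (a x : ℝ) : ℝ := ∫ t in Set.Ioi x, t ^ (a - 1) * Real.exp (-t)

/-- `g_λ(x) = 1 − Γ(x+1, λ)/Γ(x+1)`. -/
noncomputable def gFun (lam x : ℝ) : ℝ := 1 - upperGamma (x + 1) lam / Real.Gamma (x + 1)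

lemma integrableOn_gammaIntegrand {c : ℝ} (hc : 0 < c) {s : Set ℝ} (hs : s ⊆ Set.Ioi 0) :
    IntegrableOn (fun t : ℝ => t ^ (c - 1) * Real.exp (-t)) s := by
  have := (Real.GammaIntegral_convergent hc).mono_set hs
  simpa [mul_comm] using this

lemma my_setIntegral_lt {s : Set ℝ} (hs : MeasurableSet s) (hμ : volume s ≠ 0)
    {f g : ℝ → ℝ} (hf : IntegrableOn f s) (hg : IntegrableOn g s)
    (hlt : ∀ t ∈ s, g t < f t) : (∫ t in s, g t) < ∫ t in s, f t := by
  have h1 : 0 < ∫ t in s, (f t - g t) := by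
    rw [setIntegral_pos_iff_support_of_nonneg_ae]
    · have hsup : (Function.support fun t => f t - g t) ∩ s = s :=
        Set.inter_eq_right.mpr fun t ht => (sub_pos.2 (hlt t ht)).ne'
      rw [hsup]
      exact hμ.bot_lt
    · filter_upwards [ae_restrict_mem hs] with t ht
      exact sub_nonneg.2 (hlt t ht).le
    · exact hf.sub hg
  have h2 : (∫ t in s, (f t - g t)) = (∫ t in s, f t) - ∫ t in s, g t :=
    integral_sub hf hg
  linarith

/-- For fixed `λ > 0`, `g_λ` is strictly decreasing on `(0, ∞)`. -/
theorem gFun_strictAntiOn (lam : ℝ) (hlam : 0 < lam) :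
    StrictAntiOn (gFun lam) (Set.Ioi 0) := by
  intro x hx y hy hxy
  simp only [Set.mem_Ioi] at hx hy
  set a := x + 1 with ha
  set b := y + 1 with hb
  have ha1 : (1 : ℝ) < a := by linarith
  have hb1 : (1 : ℝ) < b := by linarith
  have hab : a < b := by simpa [ha, hb] using hxy
  have ha0 : (0 : ℝ) < a := by linarith
  have hb0 : (0 : ℝ) < b := by linarith
  set d := b - a with hd
  have hd0 : 0 < d := sub_pos.2 hab
  -- integrands
  set f : ℝ → ℝ → ℝ := fun c t => t ^ (c - 1) * Real.exp (-t) with hf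
  have hfpos : ∀ c : ℝ, ∀ t : ℝ, 0 < t → 0 < f c t := fun c t ht =>
    mul_pos (Real.rpow_pos_of_pos ht _) (Real.exp_pos _)
  -- key pointwise identity : f b t = t^d * f a t for t > 0
  have hkey : ∀ t : ℝ, 0 < t → f b t = t ^ d * f a t := by
    intro t ht
    simp only [hf]
    rw [← mul_assoc, ← Real.rpow_add ht]
    rw [hd]
    ring_nf
  -- sets
  have hIoiSub : Set.Ioi lam ⊆ Set.Ioi (0:ℝ) := fun t ht => lt_trans hlam ht
  have hIooSub : Set.Ioo (0:ℝ) lam ⊆ Set.Ioi (0:ℝ) := fun t ht => ht.1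
  -- integrability
  have hFa : IntegrableOn (f a) (Set.Ioi lam) := integrableOn_gammaIntegrand ha0 hIoiSub
  have hFb : IntegrableOn (f b) (Set.Ioi lam) := integrableOn_gammaIntegrand hb0 hIoiSub
  have hGa : IntegrableOn (f a) (Set.Ioo 0 lam) := integrableOn_gammaIntegrand ha0 hIooSub
  have hGb : IntegrableOn (f b) (Set.Ioo 0 lam) := integrableOn_gammaIntegrand hb0 hIooSub
  set F : ℝ → ℝ := fun c => ∫ t in Set.Ioi lam, f c t with hF
  set G : ℝ → ℝ := fun c => ∫ t in Set.Ioo 0 lam, f c t with hG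
  -- Gamma = G + F
  have hGamma : ∀ c : ℝ, 0 < c → Real.Gamma c = G c + F c := by
    intro c hc
    have h1 : Real.Gamma c = ∫ t in Set.Ioi (0:ℝ), f c t := by
      rw [Real.Gamma_eq_integral hc]
      simp only [hf]
      congr 1
      ext t
      ring
    have hunion : Set.Ioc (0:ℝ) lam ∪ Set.Ioi lam = Set.Ioi 0 :=
      Set.Ioc_union_Ioi_eq_Ioi hlam.le
    have hdisj : Disjoint (Set.Ioc (0:ℝ) lam) (Set.Ioi lam) :=
      Set.Ioc_disjoint_Ioi le_rfl
    have h2 : (∫ t in Set.Ioc (0:ℝ) lam, f c t) = G c := by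
      rw [hG]
      exact integral_Ioc_eq_integral_Ioo
    rw [h1, ← hunion, setIntegral_union hdisj measurableSet_Ioi
      (by rw [integrableOn_Ioc_iff_integrableOn_Ioo]
          exact integrableOn_gammaIntegrand hc hIooSub)
      (integrableOn_gammaIntegrand hc hIoiSub), h2]
  -- positivity of F and G
  have hFpos : ∀ c : ℝ, 0 < c → 0 < F c := by
    intro c hc
    rw [hF]
    rw [setIntegral_pos_iff_support_of_nonneg_ae]
    · have hsup : Function.support (f c) ∩ Set.Ioi lam = Set.Ioi lam :=
        Set.inter_eq_right.mpr fun t ht => (hfpos c t (hIoiSub ht)).ne'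
      rw [hsup]
      simp [Real.volume_Ioi]
    · filter_upwards [ae_restrict_mem measurableSet_Ioi] with t ht
      exact (hfpos c t (hIoiSub ht)).le
    · exact integrableOn_gammaIntegrand hc hIoiSub
  have hGpos : ∀ c : ℝ, 0 < c → 0 < G c := by
    intro c hc
    rw [hG]
    rw [setIntegral_pos_iff_support_of_nonneg_ae]
    · have hsup : Function.support (f c) ∩ Set.Ioo 0 lam = Set.Ioo 0 lam :=
        Set.inter_eq_right.mpr fun t ht => (hfpos c t ht.1).ne'
      rw [hsup]
      simp [Real.volume_Ioo, hlam]
    · filter_upwards [ae_restrict_mem measurableSet_Ioo] with t ht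
      exact (hfpos c t ht.1).le
    · exact integrableOn_gammaIntegrand hc hIooSub
  -- strict inequalities
  have hFlt : lam ^ d * F a < F b := by
    have := my_setIntegral_lt (s := Set.Ioi lam) measurableSet_Ioi
      (by simp [Real.volume_Ioi]) hFb ((hFa.const_mul (lam ^ d)))
      (fun t ht => by
        rw [hkey t (hIoiSub ht)]
        exact mul_lt_mul_of_pos_right
          (Real.rpow_lt_rpow hlam.le ht hd0) (hfpos a t (hIoiSub ht)))
    calc lam ^ d * F a = ∫ t in Set.Ioi lam, lam ^ d * f a t := by
          rw [hF, integral_const_mul]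
      _ < F b := this
  have hGlt : G b < lam ^ d * G a := by
    have := my_setIntegral_lt (s := Set.Ioo 0 lam) measurableSet_Ioo
      (by simp [Real.volume_Ioo, hlam]) ((hGa.const_mul (lam ^ d))) hGb
      (fun t ht => by
        rw [hkey t ht.1]
        exact mul_lt_mul_of_pos_right
          (Real.rpow_lt_rpow (le_of_lt ht.1) ht.2 hd0) (hfpos a t ht.1))
    calc G b < ∫ t in Set.Ioo 0 lam, lam ^ d * f a t := this
      _ = lam ^ d * G a := by rw [hG, integral_const_mul]
  -- combine: F a * G b < F b * G a
  have hcross : F a * G b < F b * G a := by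
    calc F a * G b < F a * (lam ^ d * G a) :=
          mul_lt_mul_of_pos_left hGlt (hFpos a ha0)
      _ = (lam ^ d * F a) * G a := by ring
      _ < F b * G a := mul_lt_mul_of_pos_right hFlt (hGpos a ha0)
  -- conclude
  have hGammaA : 0 < Real.Gamma a := Real.Gamma_pos_of_pos ha0
  have hGammaB : 0 < Real.Gamma b := Real.Gamma_pos_of_pos hb0
  have hQ : F a / Real.Gamma a < F b / Real.Gamma b := by
    rw [div_lt_div_iff₀ hGammaA hGammaB, hGamma a ha0, hGamma b hb0]
    nlinarith [hFpos a ha0, hFpos b hb0]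
  have hup : ∀ c : ℝ, upperGamma c lam = F c := fun c => rfl
  simp only [gFun, ← ha, ← hb, hup]
  linarith
end

section
/- For fixed λ > 0, as x → ∞, log g_λ(x) = −x log x + (1 + log λ)x − (3/2) log x + (log λ − λ − log(2π)/2) + O(1/x), where g_λ(x) = 1 − Γ(x+1,λ)/Γ(x+1). -/
open Real Filter Asymptotics

open MeasureTheory Finset Stirling Topology Nat

lemma sqrtpi_pos : (0:ℝ) < √π := Real.sqrt_pos.mpr Real.pi_pos

lemma log_stirling_diff (j : ℕ) (hj : 1 ≤ j) :
    Real.log (stirlingSeq j) - Real.log (stirlingSeq (j+1)) ≤ 1 / (4 * (j:ℝ)^2) := by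
  obtain ⟨i, rfl⟩ := Nat.exists_eq_add_of_le hj
  simpa [add_comm 1 i] using Stirling.log_stirlingSeq_sub_log_stirlingSeq_succ (i+1)

lemma le_log_stirling (n : ℕ) (hn : 1 ≤ n) : Real.log (√π) ≤ Real.log (stirlingSeq n) := by
  obtain ⟨i, rfl⟩ := Nat.exists_eq_add_of_le hn
  have h : Tendsto (fun m : ℕ => Real.log (stirlingSeq (m + 1))) atTop (𝓝 (Real.log (√π))) :=
    ((Real.continuousAt_log sqrtpi_pos.ne').tendsto.comp
      (Stirling.tendsto_stirlingSeq_sqrt_pi.comp (tendsto_add_atTop_nat 1)))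
  refine le_of_tendsto h (eventually_atTop.mpr ⟨i, fun m hm => ?_⟩)
  have := Stirling.log_stirlingSeq'_antitone (Nat.add_le_add_right hm 0)
  simpa [Function.comp, add_comm 1 i, add_comm 1 m] using
    Stirling.log_stirlingSeq'_antitone (by omega : i ≤ m)

lemma log_stirling_le (n : ℕ) (hn : 1 ≤ n) :
    Real.log (stirlingSeq n) ≤ Real.log (√π) + 1 / (2 * n) := by
  have key : ∀ m : ℕ, Real.log (stirlingSeq n) - Real.log (stirlingSeq (n + m)) ≤ 1 / (2 * n) := by
    intro m
    have tele : Real.log (stirlingSeq n) - Real.log (stirlingSeq (n + m)) =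
        ∑ j ∈ range m, (Real.log (stirlingSeq (n + j)) - Real.log (stirlingSeq (n + j + 1))) := by
      have := Finset.sum_range_sub' (fun j => Real.log (stirlingSeq (n + j))) m
      simp only [add_zero] at this
      rw [← this]
      exact Finset.sum_congr rfl fun j _ => by ring_nf
    rw [tele]
    have h1 : ∑ j ∈ range m, (Real.log (stirlingSeq (n + j)) - Real.log (stirlingSeq (n + j + 1)))
        ≤ ∑ j ∈ range m, (((n:ℝ) + j)^2)⁻¹ / 4 := by
      refine Finset.sum_le_sum fun j _ => ?_
      have := log_stirling_diff (n + j) (by omega)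
      push_cast at this
      refine this.trans (le_of_eq ?_)
      rw [one_div, mul_inv]
      ring
    refine h1.trans ?_
    have h2 : ∑ j ∈ range m, (((n:ℝ) + j)^2)⁻¹ / 4 = (∑ i ∈ Ico n (n + m), ((i:ℝ)^2)⁻¹) / 4 := by
      rw [Finset.sum_div, Finset.sum_Ico_eq_sum_range]
      simp
    rw [h2]
    have h3 : ∑ i ∈ Ico n (n + m), ((i:ℝ)^2)⁻¹ ≤ ∑ i ∈ Ioo (n-1) (n + m), ((i:ℝ)^2)⁻¹ := by
      refine Finset.sum_le_sum_of_subset_of_nonneg (fun i hi => ?_) (fun i _ _ => by positivity)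
      simp only [Finset.mem_Ico, Finset.mem_Ioo] at hi ⊢
      omega
    have h4 : ∑ i ∈ Ioo (n-1) (n + m), ((i:ℝ)^2)⁻¹ ≤ 2 / ((n:ℝ) - 1 + 1) := by
      have := sum_Ioo_inv_sq_le (α := ℝ) (n-1) (n+m)
      push_cast [Nat.cast_sub hn] at this ⊢
      convert this using 3
    have hn' : (1:ℝ) ≤ n := by exact_mod_cast hn
    calc (∑ i ∈ Ico n (n + m), ((i:ℝ)^2)⁻¹) / 4 ≤ (2 / ((n:ℝ) - 1 + 1)) / 4 := by
          apply div_le_div_of_nonneg_right (h3.trans h4) (by norm_num) |>.trans le_rfl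
      _ = 1 / (2 * n) := by rw [sub_add_cancel]; ring
  have h : Tendsto (fun m : ℕ => Real.log (stirlingSeq (n + m))) atTop (𝓝 (Real.log (√π))) :=
    ((Real.continuousAt_log sqrtpi_pos.ne').tendsto.comp
      (Stirling.tendsto_stirlingSeq_sqrt_pi.comp (by
        simpa [add_comm] using tendsto_add_atTop_nat n)))
  have hle : Real.log (stirlingSeq n) - 1 / (2 * n) ≤ Real.log (√π) :=
    ge_of_tendsto h (Eventually.of_forall fun m => by linarith [key m])
  linarith

lemma log_factorial_bounds (n : ℕ) (hn : 1 ≤ n) :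
    0 ≤ Real.log (n !) - ((n:ℝ) * Real.log n - n + Real.log (2 * π * n) / 2) ∧
    Real.log (n !) - ((n:ℝ) * Real.log n - n + Real.log (2 * π * n) / 2) ≤ 1 / (2 * n) := by
  have hn' : (0:ℝ) < n := by exact_mod_cast hn
  have hf := Stirling.log_stirlingSeq_formula n
  have hlogdiv : Real.log ((n:ℝ) / Real.exp 1) = Real.log n - 1 := by
    rw [Real.log_div hn'.ne' (Real.exp_ne_zero 1), Real.log_exp]
  have hsplit : Real.log (2 * π * n) = Real.log (2 * n) + Real.log π := by
    rw [show (2:ℝ) * π * n = (2 * n) * π by ring,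
      Real.log_mul (by positivity) Real.pi_pos.ne']
  have hsqrt : Real.log (√π) = Real.log π / 2 := Real.log_sqrt Real.pi_pos.le
  have key : Real.log (n !) - ((n:ℝ) * Real.log n - n + Real.log (2 * π * n) / 2)
      = Real.log (stirlingSeq n) - Real.log (√π) := by
    rw [hsplit, hsqrt]
    rw [hlogdiv] at hf
    have : Real.log (stirlingSeq n) = Real.log n ! - 1 / 2 * Real.log (2 * n)
        - n * (Real.log n - 1) := hf
    rw [this]; ring
  rw [key]
  constructor
  · linarith [le_log_stirling n hn]
  · linarith [log_stirling_le n hn]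

lemma log_Gamma_stirling {x : ℝ} (hx : 2 ≤ x) :
    |Real.log (Real.Gamma (x+1)) - (x * Real.log x - x + Real.log (2 * π * x) / 2)| ≤ 4 / x := by
  have hx0 : (0:ℝ) < x := by linarith
  set n : ℕ := ⌊x⌋₊ with hn
  have hn2 : 2 ≤ n := Nat.le_floor (by exact_mod_cast hx)
  have hnx : (n:ℝ) ≤ x := Nat.floor_le hx0.le
  have hxn1 : x < n + 1 := Nat.lt_floor_add_one x
  have hn0 : (0:ℝ) < n := by exact_mod_cast (by omega : 0 < n)
  have hn1 : (1:ℝ) ≤ n := by exact_mod_cast (by omega : 1 ≤ n)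
  clear_value n
  set θ : ℝ := x - n with hθ
  clear_value θ
  have hθ0 : 0 ≤ θ := by simp [hθ]; linarith
  have hθ1 : θ < 1 := by simp [hθ]; linarith
  have hc := Real.convexOn_log_Gamma
  set f : ℝ → ℝ := Real.log ∘ Real.Gamma with hfdef
  -- Gamma recurrences
  have hΓn : Real.Gamma ((n:ℝ) + 1) = n ! := Real.Gamma_nat_eq_factorial n
  have hfn1 : f ((n:ℝ) + 1) = Real.log (n !) := by simp [hfdef, hΓn]
  have hstep : ∀ m : ℕ, 1 ≤ m → f ((m:ℝ) + 1) = Real.log m + f (m:ℝ) := by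
    intro m hm
    have hm0 : (0:ℝ) < m := by exact_mod_cast hm
    have := Real.Gamma_add_one (s := (m:ℝ)) hm0.ne'
    simp only [hfdef, Function.comp_apply, this]
    rw [Real.log_mul hm0.ne' (Real.Gamma_pos_of_pos hm0).ne']
  -- upper bound by convexity
  have hup : f (x + 1) ≤ f ((n:ℝ) + 1) + θ * Real.log ((n:ℝ) + 1) := by
    have h1 : (1 - θ) • ((n:ℝ) + 1) + θ • ((n:ℝ) + 2) = x + 1 := by
      simp only [smul_eq_mul]; ring_nf; linarith
    have h2 := hc.2 (Set.mem_Ioi.mpr (by linarith : (0:ℝ) < (n:ℝ)+1))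
      (Set.mem_Ioi.mpr (by linarith : (0:ℝ) < (n:ℝ)+2))
      (by linarith : (0:ℝ) ≤ 1 - θ) hθ0 (by ring)
    rw [h1] at h2
    have h3 : f ((n:ℝ) + 2) = Real.log ((n:ℝ)+1) + f ((n:ℝ) + 1) := by
      have := hstep (n+1) (by omega)
      push_cast at this
      convert this using 2 <;> push_cast <;> ring
    simp only [smul_eq_mul] at h2
    rw [h3] at h2
    nlinarith [h2]
  -- lower bound by convexity
  have hlow : f ((n:ℝ) + 1) + θ * Real.log n ≤ f (x + 1) := by
    rcases eq_or_lt_of_le hθ0 with h0 | h0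
    · have hxeq : x = n := by simp [hθ] at h0; linarith
      rw [hxeq]; simp [← h0]
    · have hden : (0:ℝ) < 1 + θ := by linarith
      have h1 : (θ/(1+θ)) • (n:ℝ) + (1/(1+θ)) • (x + 1) = (n:ℝ) + 1 := by
        simp only [smul_eq_mul]
        field_simp
        linarith
      have h2 := hc.2 (Set.mem_Ioi.mpr hn0) (Set.mem_Ioi.mpr (by linarith : (0:ℝ) < x + 1))
        (by positivity : (0:ℝ) ≤ θ/(1+θ)) (by positivity : (0:ℝ) ≤ 1/(1+θ))
        (by field_simp; ring)
      rw [h1] at h2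
      simp only [smul_eq_mul] at h2
      have hfn : f ((n:ℝ)) = f ((n:ℝ)+1) - Real.log n := by
        have := hstep n (by omega); linarith
      rw [hfn] at h2
      have h3 := mul_le_mul_of_nonneg_left h2 hden.le
      have heq : (1+θ) * (θ / (1 + θ) * (f ((n:ℝ)+1) - Real.log ↑n) + 1 / (1 + θ) * f (x + 1))
          = θ * (f ((n:ℝ)+1) - Real.log ↑n) + f (x+1) := by field_simp
      rw [heq] at h3
      nlinarith [h3]
  -- analytic comparison
  have hd0 : Real.log (n:ℝ) ≤ Real.log ((n:ℝ)+1) := Real.log_le_log hn0 (by linarith)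
  have hd1 : Real.log ((n:ℝ)+1) - Real.log (n:ℝ) ≤ 1/(n:ℝ) := by
    have h := Real.log_le_sub_one_of_pos (show (0:ℝ) < ((n:ℝ)+1)/n by positivity)
    rw [Real.log_div (by positivity) hn0.ne'] at h
    have : ((n:ℝ)+1)/n - 1 = 1/n := by field_simp; ring
    linarith
  have hθd : θ * Real.log ((n:ℝ)+1) ≤ θ * Real.log (n:ℝ) + 1/(n:ℝ) := by
    nlinarith [hd0, hd1, hθ0, hθ1]
  set u : ℝ := Real.log x - Real.log n with hu
  clear_value u
  have hxeq : x = (n:ℝ) + θ := by simp [hθ]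
  have hu_up : u ≤ θ/(n:ℝ) := by
    have h := Real.log_le_sub_one_of_pos (show (0:ℝ) < x/n by positivity)
    rw [Real.log_div hx0.ne' hn0.ne'] at h
    have h2 : x/(n:ℝ) - 1 = θ/(n:ℝ) := by field_simp; linarith
    simp only [hu]; linarith
  have hu_low : θ/x ≤ u := by
    have h := Real.log_le_sub_one_of_pos (show (0:ℝ) < (n:ℝ)/x by positivity)
    rw [Real.log_div hn0.ne' hx0.ne'] at h
    have h2 : (n:ℝ)/x - 1 = -(θ/x) := by field_simp; linarith
    simp only [hu]; linarith
  have hu0 : 0 ≤ u := le_trans (by positivity) hu_low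
  have huN : u ≤ 1/(n:ℝ) := hu_up.trans ((div_le_div_iff_of_pos_right hn0).mpr hθ1.le)
  have hAlow : 0 ≤ x*u - θ := by
    have h := (div_le_iff₀ hx0).mp hu_low
    nlinarith [h]
  have hAup : x*u - θ ≤ 1/(n:ℝ) := by
    have h1 : x*u ≤ x*(θ/(n:ℝ)) := mul_le_mul_of_nonneg_left hu_up hx0.le
    have h2 : x * (θ/(n:ℝ)) = θ + θ*θ/(n:ℝ) := by
      rw [hxeq, add_mul, mul_div_assoc', mul_comm (n:ℝ) θ, mul_div_assoc,
        div_self hn0.ne', mul_one, mul_div_assoc']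
    have h3 : θ*θ/(n:ℝ) ≤ 1/(n:ℝ) := by
      exact (div_le_div_iff_of_pos_right hn0).mpr (mul_le_one₀ hθ1.le hθ0 hθ1.le)
    linarith
  have hlx : Real.log (2*π*x) = Real.log (2*π) + Real.log x := by
    rw [Real.log_mul (by positivity) hx0.ne']
  have hln : Real.log (2*π*(n:ℝ)) = Real.log (2*π) + Real.log (n:ℝ) := by
    rw [Real.log_mul (by positivity) hn0.ne']
  have hEq : x * Real.log x - x + Real.log (2*π*x)/2
      = ((n:ℝ) * Real.log (n:ℝ) - (n:ℝ) + Real.log (2*π*(n:ℝ))/2 + θ * Real.log (n:ℝ))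
        + (x*u - θ) + u/2 := by
    rw [hlx, hln]
    simp only [hu, hθ]
    ring
  have hfb := log_factorial_bounds n (by omega)
  have h2n : 1/(n:ℝ) ≤ 2/x := by
    rw [div_le_div_iff₀ hn0 hx0]; linarith
  have hfx : f (x+1) = Real.log (Real.Gamma (x+1)) := rfl
  have e4 : (4:ℝ)/x = 4*(1/x) := by ring
  have e2x : (2:ℝ)/x = 2*(1/x) := by ring
  have e12 : 1/(2*(n:ℝ)) = (1/2)*(1/(n:ℝ)) := by ring
  have hxinv : (0:ℝ) ≤ 1/x := by positivity
  rw [abs_le]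
  constructor
  · linarith [hlow, hup, hθd, hfb.1, hfb.2, hEq, hAlow, hAup, hu0, huN, h2n, hfn1]
  · linarith [hlow, hup, hθd, hfb.1, hfb.2, hEq, hAlow, hAup, hu0, huN, h2n, hfn1]

noncomputable def lowGamma (lam x : ℝ) : ℝ := ∫ t in Set.Ioc 0 lam, t ^ x * Real.exp (-t)

section LowGamma
variable {lam x : ℝ}

lemma integral_Ioc_rpow (hlam : 0 < lam) (hx : 0 < x) :
    ∫ t in Set.Ioc 0 lam, t ^ x = lam ^ (x+1) / (x+1) := by
  have h := integral_rpow (a := 0) (b := lam) (Or.inl (by linarith : (-1:ℝ) < x))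
  rw [intervalIntegral.integral_of_le hlam.le] at h
  rw [h, Real.zero_rpow (by positivity : x + 1 ≠ 0), sub_zero]

lemma integrableOn_Ioc_rpow (hlam : 0 < lam) (hx : 0 < x) :
    MeasureTheory.IntegrableOn (fun t : ℝ => t ^ x) (Set.Ioc 0 lam) := by
  have h := intervalIntegral.intervalIntegrable_rpow' (a := 0) (b := lam)
    (by linarith : (-1:ℝ) < x)
  rwa [intervalIntegrable_iff_integrableOn_Ioc_of_le hlam.le] at h

lemma integrableOn_Ioi_rpow_exp (hx : 0 < x) :
    MeasureTheory.IntegrableOn (fun t : ℝ => t ^ x * Real.exp (-t)) (Set.Ioi 0) := by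
  have h := Real.GammaIntegral_convergent (by linarith : 0 < x + 1)
  simp only [add_sub_cancel_right] at h
  exact h.congr_fun (fun t _ => mul_comm _ _) measurableSet_Ioi

lemma gamma_split (hlam : 0 < lam) (hx : 0 < x) :
    Real.Gamma (x+1) = lowGamma lam x + upperGamma (x+1) lam := by
  have hint := integrableOn_Ioi_rpow_exp hx
  have hG : Real.Gamma (x+1) = ∫ t in Set.Ioi (0:ℝ), t ^ x * Real.exp (-t) := by
    rw [Real.Gamma_eq_integral (by linarith : 0 < x + 1)]
    simp only [add_sub_cancel_right]
    exact MeasureTheory.setIntegral_congr_fun measurableSet_Ioi (fun t _ => mul_comm _ _)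
  have hsplit : ∫ t in Set.Ioi (0:ℝ), t ^ x * Real.exp (-t)
      = (∫ t in Set.Ioc 0 lam, t ^ x * Real.exp (-t))
        + ∫ t in Set.Ioi lam, t ^ x * Real.exp (-t) := by
    rw [← Set.Ioc_union_Ioi_eq_Ioi hlam.le]
    exact MeasureTheory.setIntegral_union (Set.Ioc_disjoint_Ioi le_rfl) measurableSet_Ioi
      (hint.mono_set Set.Ioc_subset_Ioi_self)
      (hint.mono_set (Set.Ioi_subset_Ioi hlam.le))
  have hup : upperGamma (x+1) lam = ∫ t in Set.Ioi lam, t ^ x * Real.exp (-t) := by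
    unfold upperGamma
    simp only [add_sub_cancel_right]
  rw [hG, hsplit, hup, lowGamma]

end LowGamma

section LowBounds
variable {lam x : ℝ}

lemma lowGamma_ge (hlam : 0 < lam) (hx : 0 < x) :
    Real.exp (-lam) * (lam ^ (x+1) / (x+1)) ≤ lowGamma lam x := by
  have hI0 := integral_Ioc_rpow hlam hx
  have hint0 := integrableOn_Ioc_rpow hlam hx
  have hintE : MeasureTheory.IntegrableOn (fun t : ℝ => t ^ x * Real.exp (-t)) (Set.Ioc 0 lam) :=
    (integrableOn_Ioi_rpow_exp hx).mono_set Set.Ioc_subset_Ioi_self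
  have hmono : ∫ t in Set.Ioc 0 lam, Real.exp (-lam) * t ^ x ≤ lowGamma lam x := by
    refine MeasureTheory.setIntegral_mono_on (hint0.const_mul _) hintE measurableSet_Ioc ?_
    intro t ht
    rw [mul_comm]
    refine mul_le_mul_of_nonneg_left ?_ (Real.rpow_nonneg ht.1.le x)
    exact Real.exp_le_exp.mpr (by linarith [ht.2])
  calc Real.exp (-lam) * (lam ^ (x+1) / (x+1))
      = ∫ t in Set.Ioc 0 lam, Real.exp (-lam) * t ^ x := by
        rw [MeasureTheory.integral_const_mul, hI0]
    _ ≤ lowGamma lam x := hmono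

lemma lowGamma_le (hlam : 0 < lam) (hx : 0 < x) :
    lowGamma lam x ≤ Real.exp (-lam) * (lam ^ (x+1) / (x+1)) * (1 + lam * Real.exp lam / (x+2)) := by
  have hI0 := integral_Ioc_rpow hlam hx
  have hJ : ∫ t in Set.Ioc 0 lam, t ^ (x+1) = lam ^ (x+2) / (x+2) := by
    have := integral_Ioc_rpow hlam (by linarith : 0 < x + 1)
    rw [this, show x+1+1 = x+2 from by ring]
  have hint0 := integrableOn_Ioc_rpow hlam hx
  have hint1 := integrableOn_Ioc_rpow hlam (by linarith : 0 < x + 1)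
  have hintE : MeasureTheory.IntegrableOn (fun t : ℝ => t ^ x * Real.exp (-t)) (Set.Ioc 0 lam) :=
    (integrableOn_Ioi_rpow_exp hx).mono_set Set.Ioc_subset_Ioi_self
  have hmono : lowGamma lam x ≤
      ∫ t in Set.Ioc 0 lam, (Real.exp (-lam) * t ^ x + (lam * t ^ x - t ^ (x+1))) := by
    refine MeasureTheory.setIntegral_mono_on hintE
      (((hint0.const_mul _).add ((hint0.const_mul _).sub hint1))) measurableSet_Ioc ?_
    intro t ht
    have ht0 : 0 < t := ht.1
    have htl : t ≤ lam := ht.2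
    have htx : (0:ℝ) ≤ t ^ x := Real.rpow_nonneg ht0.le x
    have hrw : t ^ (x+1) = t ^ x * t := Real.rpow_add_one ht0.ne' x
    have hkey : Real.exp (-t) ≤ Real.exp (-lam) + (lam - t) := by
      have hA : Real.exp (-lam) = Real.exp (-t) * Real.exp (-(lam - t)) := by
        rw [← Real.exp_add]; ring_nf
      have hB : 1 - (lam - t) ≤ Real.exp (-(lam - t)) := by
        have := Real.add_one_le_exp (-(lam - t)); linarith
      have hC : Real.exp (-t) ≤ 1 := by
        rw [← Real.exp_zero]; exact Real.exp_le_exp.mpr (by linarith)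
      have hD : Real.exp (-t) * (lam - t) ≤ (lam - t) := by
        nlinarith [hC, Real.exp_pos (-t)]
      have hE : Real.exp (-t) * (1 - (lam - t)) ≤ Real.exp (-lam) := by
        rw [hA]; exact mul_le_mul_of_nonneg_left hB (Real.exp_pos _).le
      have hE' : Real.exp (-t) * (1 - (lam - t))
          = Real.exp (-t) - Real.exp (-t) * (lam - t) := by ring
      linarith
    calc t ^ x * Real.exp (-t) ≤ t ^ x * (Real.exp (-lam) + (lam - t)) :=
          mul_le_mul_of_nonneg_left hkey htx
      _ = Real.exp (-lam) * t ^ x + (lam * t ^ x - t ^ (x+1)) := by rw [hrw]; ring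
  have hcalc : ∫ t in Set.Ioc 0 lam, (Real.exp (-lam) * t ^ x + (lam * t ^ x - t ^ (x+1)))
      = Real.exp (-lam) * (lam ^ (x+1)/(x+1)) + (lam * (lam ^ (x+1)/(x+1)) - lam ^ (x+2)/(x+2)) := by
    have e1 : ∫ t in Set.Ioc 0 lam, (Real.exp (-lam) * t ^ x + (lam * t ^ x - t ^ (x+1)))
        = (∫ t in Set.Ioc 0 lam, Real.exp (-lam) * t ^ x)
          + ∫ t in Set.Ioc 0 lam, (lam * t ^ x - t ^ (x+1)) :=
      MeasureTheory.integral_add (hint0.const_mul _) ((hint0.const_mul _).sub hint1)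
    have e2 : ∫ t in Set.Ioc 0 lam, (lam * t ^ x - t ^ (x+1))
        = (∫ t in Set.Ioc 0 lam, lam * t ^ x) - ∫ t in Set.Ioc 0 lam, t ^ (x+1) :=
      MeasureTheory.integral_sub (hint0.const_mul _) hint1
    rw [e1, e2, MeasureTheory.integral_const_mul, MeasureTheory.integral_const_mul, hI0, hJ]
  have hfin : Real.exp (-lam) * (lam ^ (x+1)/(x+1)) + (lam * (lam ^ (x+1)/(x+1)) - lam ^ (x+2)/(x+2))
      = Real.exp (-lam) * (lam ^ (x+1) / (x+1)) * (1 + lam * Real.exp lam / (x+2)) := by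
    have h1 : lam ^ (x+2) = lam ^ (x+1) * lam := by
      rw [show x + 2 = (x+1) + 1 by ring, Real.rpow_add_one hlam.ne']
    have h2 : Real.exp (-lam) * Real.exp lam = 1 := by rw [← Real.exp_add]; simp
    have hx1 : x + 1 ≠ 0 := by positivity
    have hx2 : x + 2 ≠ 0 := by positivity
    rw [Real.exp_neg, h1]
    field_simp
    ring
  rw [hcalc, hfin] at hmono
  exact hmono

end LowBounds

lemma log_lowGamma_bound {lam x : ℝ} (hlam : 0 < lam) (hx : 0 < x) :
    |Real.log (lowGamma lam x) - ((x+1) * Real.log lam - lam - Real.log (x+1))| ≤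
      lam * Real.exp lam / x := by
  set B : ℝ := Real.exp (-lam) * (lam ^ (x+1) / (x+1)) with hB
  have hBpos : 0 < B := by
    have := Real.rpow_pos_of_pos hlam (x+1)
    positivity
  have hlow := lowGamma_ge hlam hx
  have hupp := lowGamma_le hlam hx
  have hLpos : 0 < lowGamma lam x := lt_of_lt_of_le hBpos hlow
  have hlogB : Real.log B = (x+1) * Real.log lam - lam - Real.log (x+1) := by
    rw [hB, Real.log_mul (Real.exp_pos _).ne' (by positivity), Real.log_exp,
      Real.log_div (by positivity) (by positivity), Real.log_rpow hlam]
    ring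
  have hu : (0:ℝ) ≤ lam * Real.exp lam / (x+2) := by positivity
  have h1 : Real.log B ≤ Real.log (lowGamma lam x) := Real.log_le_log hBpos hlow
  have h2 : Real.log (lowGamma lam x) ≤ Real.log B + lam * Real.exp lam / (x+2) := by
    have := Real.log_le_log hLpos hupp
    rw [Real.log_mul hBpos.ne' (by positivity)] at this
    have hln : Real.log (1 + lam * Real.exp lam / (x+2)) ≤ lam * Real.exp lam / (x+2) := by
      have := Real.log_le_sub_one_of_pos (show (0:ℝ) < 1 + lam * Real.exp lam / (x+2) by linarith)
      linarith
    linarith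
  have h3 : lam * Real.exp lam / (x+2) ≤ lam * Real.exp lam / x :=
    div_le_div_of_nonneg_left (by positivity) hx (by linarith)
  rw [abs_le]
  constructor
  · have : (0:ℝ) ≤ lam * Real.exp lam / x := by positivity
    linarith
  · linarith

/-- Asymptotic expansion: as `x → ∞`,
`log g_λ(x) = −x log x + (1 + log λ)x − (3/2) log x + (log λ − λ − log(2π)/2) + O(1/x)`. -/
theorem log_gFun_asymptotic (lam : ℝ) (hlam : 0 < lam) :
    (fun x : ℝ => Real.log (gFun lam x) -
        (-x * Real.log x + (1 + Real.log lam) * x - (3 / 2) * Real.log x +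
          (Real.log lam - lam - Real.log (2 * Real.pi) / 2)))
      =O[atTop] (fun x : ℝ => 1 / x) := by
  rw [isBigO_iff]
  refine ⟨lam * Real.exp lam + 5, ?_⟩
  filter_upwards [eventually_ge_atTop (2:ℝ)] with x hx
  have hx0 : (0:ℝ) < x := by linarith
  have hΓpos : 0 < Real.Gamma (x+1) := Real.Gamma_pos_of_pos (by linarith)
  have hsplit := gamma_split (lam := lam) hlam (show 0 < x by linarith)
  have hLpos : 0 < lowGamma lam x :=
    lt_of_lt_of_le (by
      have := Real.rpow_pos_of_pos hlam (x+1); positivity) (lowGamma_ge hlam hx0)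
  have hg : gFun lam x = lowGamma lam x / Real.Gamma (x+1) := by
    rw [gFun, eq_div_iff hΓpos.ne', sub_mul, one_mul, div_mul_cancel₀ _ hΓpos.ne', hsplit]
    ring
  have hlogg : Real.log (gFun lam x) = Real.log (lowGamma lam x) - Real.log (Real.Gamma (x+1)) := by
    rw [hg, Real.log_div hLpos.ne' hΓpos.ne']
  have hA := log_Gamma_stirling hx
  have hBnd := log_lowGamma_bound hlam hx0
  have hlx : Real.log (2*π*x) = Real.log (2*π) + Real.log x := by
    rw [Real.log_mul (by positivity) hx0.ne']
  have hshift : |Real.log x - Real.log (x+1)| ≤ 1/x := by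
    have hle : Real.log x ≤ Real.log (x+1) := Real.log_le_log hx0 (by linarith)
    have h := Real.log_le_sub_one_of_pos (show (0:ℝ) < (x+1)/x by positivity)
    rw [Real.log_div (by positivity) hx0.ne'] at h
    have : (x+1)/x - 1 = 1/x := by field_simp; ring
    rw [abs_le]
    constructor <;> nlinarith [h, hle, (by positivity : (0:ℝ) ≤ 1/x)]
  have habs : |1/x| = 1/x := abs_of_pos (by positivity)
  simp only [Real.norm_eq_abs]
  rw [habs, hlogg]
  rw [abs_le] at hA hBnd hshift ⊢
  have e1 : (lam * Real.exp lam)/x = (lam * Real.exp lam)*(1/x) := by ring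
  have e4 : (4:ℝ)/x = 4*(1/x) := by ring
  have hinv : (0:ℝ) ≤ 1/x := by positivity
  constructor
  · nlinarith [hA.1, hA.2, hBnd.1, hBnd.2, hshift.1, hshift.2, hlx, hinv]
  · nlinarith [hA.1, hA.2, hBnd.1, hBnd.2, hshift.1, hshift.2, hlx, hinv]
end

section
/- For fixed λ > 0, the leading-order asymptotics log g_λ(x) ∼ −x log(x/λ) + x holds as x → ∞; equivalently, log g_λ(x) / (x log x) → −1 as x → ∞. -/
open Real Filter

open MeasureTheory Set in
lemma integrableOn_pow_exp {x : ℝ} (hx : 0 < x + 1) :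
    IntegrableOn (fun t : ℝ => t ^ x * Real.exp (-t)) (Set.Ioi 0) := by
  have h := Real.GammaIntegral_convergent hx
  simp only [add_sub_cancel_right] at h
  exact h.congr_fun (fun t ht => mul_comm _ _) measurableSet_Ioi

open MeasureTheory Set in
lemma Gamma_eq_int (x : ℝ) (hx : 0 < x + 1) :
    Real.Gamma (x + 1) = ∫ t in Ioi (0:ℝ), t ^ x * Real.exp (-t) := by
  rw [Real.Gamma_eq_integral hx]
  simp only [add_sub_cancel_right]
  exact setIntegral_congr_fun measurableSet_Ioi fun t _ => mul_comm _ _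

open MeasureTheory Set in
lemma Gamma_split (lam x : ℝ) (hx : 0 < x + 1) (hlam : 0 < lam) :
    Real.Gamma (x + 1) = (∫ t in Ioc (0:ℝ) lam, t ^ x * Real.exp (-t))
      + upperGamma (x + 1) lam := by
  have hU : upperGamma (x + 1) lam = ∫ t in Ioi lam, t ^ x * Real.exp (-t) := by
    simp only [upperGamma, add_sub_cancel_right]
  rw [Gamma_eq_int x hx, hU, ← Ioc_union_Ioi_eq_Ioi hlam.le,
    setIntegral_union (Ioc_disjoint_Ioi le_rfl) measurableSet_Ioi
      ((integrableOn_pow_exp hx).mono_set Ioc_subset_Ioi_self)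
      ((integrableOn_pow_exp hx).mono_set (Ioi_subset_Ioi hlam.le))]

open MeasureTheory Set in
lemma gFun_eq (lam x : ℝ) (hx : 0 < x + 1) (hlam : 0 < lam) :
    gFun lam x = (∫ t in Ioc (0:ℝ) lam, t ^ x * Real.exp (-t)) / Real.Gamma (x + 1) := by
  have hΓ := Real.Gamma_pos_of_pos hx
  rw [gFun, eq_div_iff hΓ.ne', sub_mul, one_mul, div_mul_cancel₀ _ hΓ.ne']
  have := Gamma_split lam x hx hlam
  linarith

open MeasureTheory Set in
lemma int_rpow_Ioc (lam x : ℝ) (hx : 0 < x + 1) (hlam : 0 < lam) :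
    ∫ t in Ioc (0:ℝ) lam, t ^ x = lam ^ (x + 1) / (x + 1) := by
  rw [← intervalIntegral.integral_of_le hlam.le,
    integral_rpow (Or.inl (by linarith : (-1:ℝ) < x)),
    Real.zero_rpow (by linarith : x + 1 ≠ 0)]
  ring

open MeasureTheory Set in
lemma integrableOn_rpow_Ioc (lam x : ℝ) (hx : 0 < x + 1) (hlam : 0 < lam) :
    IntegrableOn (fun t : ℝ => t ^ x) (Ioc (0:ℝ) lam) := by
  have h := intervalIntegral.intervalIntegrable_rpow' (show (-1:ℝ) < x by linarith) (a := 0) (b := lam)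
  rwa [intervalIntegrable_iff, uIoc_of_le hlam.le] at h

open MeasureTheory Set in
lemma I_le (lam x : ℝ) (hx : 0 < x + 1) (hlam : 0 < lam) :
    (∫ t in Ioc (0:ℝ) lam, t ^ x * Real.exp (-t)) ≤ lam ^ (x + 1) / (x + 1) := by
  rw [← int_rpow_Ioc lam x hx hlam]
  refine setIntegral_mono_on ((integrableOn_pow_exp hx).mono_set Ioc_subset_Ioi_self)
    (integrableOn_rpow_Ioc lam x hx hlam) measurableSet_Ioc fun t ht => ?_
  have h1 : Real.exp (-t) ≤ 1 := Real.exp_le_one_iff.2 (by linarith [ht.1])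
  have h2 : (0:ℝ) ≤ t ^ x := Real.rpow_nonneg ht.1.le x
  nlinarith

open MeasureTheory Set in
lemma le_I (lam x : ℝ) (hx : 0 < x + 1) (hlam : 0 < lam) :
    Real.exp (-lam) * (lam ^ (x + 1) / (x + 1))
      ≤ ∫ t in Ioc (0:ℝ) lam, t ^ x * Real.exp (-t) := by
  rw [← int_rpow_Ioc lam x hx hlam, ← integral_const_mul]
  refine setIntegral_mono_on ((integrableOn_rpow_Ioc lam x hx hlam).const_mul _)
    ((integrableOn_pow_exp hx).mono_set Ioc_subset_Ioi_self) measurableSet_Ioc fun t ht => ?_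
  have h1 : Real.exp (-lam) ≤ Real.exp (-t) := Real.exp_le_exp.2 (by linarith [ht.2])
  have h2 : (0:ℝ) ≤ t ^ x := Real.rpow_nonneg ht.1.le x
  nlinarith

open MeasureTheory Set in
lemma Gamma_lower (x : ℝ) (hx : 0 < x) :
    x ^ x * Real.exp (-(x + 1)) ≤ Real.Gamma (x + 1) := by
  rw [Gamma_eq_int x (by linarith)]
  have hmeas : (volume (Ioc x (x + 1))).toReal = 1 := by
    rw [Real.volume_Ioc]
    norm_num
  have h1 : x ^ x * Real.exp (-(x + 1))
      = ∫ _t in Ioc x (x + 1), x ^ x * Real.exp (-(x + 1)) := by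
    rw [setIntegral_const, measureReal_def, hmeas, one_smul]
  rw [h1]
  have hsub : Ioc x (x + 1) ⊆ Ioi (0:ℝ) := fun t ht => lt_trans hx ht.1
  calc (∫ _t in Ioc x (x + 1), x ^ x * Real.exp (-(x + 1)))
      ≤ ∫ t in Ioc x (x + 1), t ^ x * Real.exp (-t) := by
        refine setIntegral_mono_on (integrableOn_const (by
          rw [Real.volume_Ioc]; exact ENNReal.ofReal_ne_top))
          ((integrableOn_pow_exp (by linarith)).mono_set hsub) measurableSet_Ioc
          fun t ht => ?_
        have h2 : x ^ x ≤ t ^ x := Real.rpow_le_rpow hx.le ht.1.le hx.le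
        have h3 : Real.exp (-(x + 1)) ≤ Real.exp (-t) := Real.exp_le_exp.2 (by linarith [ht.2])
        have h4 : (0:ℝ) ≤ x ^ x := Real.rpow_nonneg hx.le x
        nlinarith [Real.exp_pos (-t)]
    _ ≤ ∫ t in Ioi (0:ℝ), t ^ x * Real.exp (-t) := by
        refine setIntegral_mono_set (integrableOn_pow_exp (by linarith)) ?_
          (HasSubset.Subset.eventuallyLE hsub)
        filter_upwards [self_mem_ae_restrict measurableSet_Ioi] with t ht
        exact mul_nonneg (Real.rpow_nonneg (le_of_lt ht) x) (Real.exp_pos _).le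

open MeasureTheory Set in
lemma Gamma_upper (x : ℝ) (hx : 0 < x) :
    Real.Gamma (x + 1) ≤ 2 * ((2 * x) ^ x * Real.exp (-x)) := by
  have h2x : (0:ℝ) < 2 * x := by linarith
  have key : ∀ t ∈ Ioi (0:ℝ),
      t ^ x * Real.exp (-t) ≤ (2 * x) ^ x * Real.exp (-x) * Real.exp (-(1/2) * t) := by
    intro t ht
    have htpos : (0:ℝ) < t := ht
    have h1 : t ^ x = (2 * x) ^ x * (t / (2 * x)) ^ x := by
      rw [← Real.mul_rpow h2x.le (by positivity)]
      congr 1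
      field_simp
    have h2 : (t / (2 * x)) ^ x ≤ Real.exp (t / 2 - x) := by
      rw [Real.rpow_def_of_pos (by positivity)]
      apply Real.exp_le_exp.2
      have hlog := Real.log_le_sub_one_of_pos (show (0:ℝ) < t / (2 * x) by positivity)
      calc Real.log (t / (2 * x)) * x ≤ (t / (2 * x) - 1) * x :=
            mul_le_mul_of_nonneg_right hlog hx.le
        _ = t / 2 - x := by field_simp
    calc t ^ x * Real.exp (-t) = (2 * x) ^ x * ((t / (2 * x)) ^ x * Real.exp (-t)) := by
          rw [h1]; ring
      _ ≤ (2 * x) ^ x * (Real.exp (t / 2 - x) * Real.exp (-t)) := by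
          have := mul_le_mul_of_nonneg_right h2 (Real.exp_pos (-t)).le
          exact mul_le_mul_of_nonneg_left this (Real.rpow_nonneg h2x.le x)
      _ = (2 * x) ^ x * Real.exp (-x) * Real.exp (-(1/2) * t) := by
          rw [← Real.exp_add, mul_assoc, ← Real.exp_add]
          congr 2
          ring
  have hint : ∫ t in Ioi (0:ℝ), Real.exp (-(1/2 : ℝ) * t) = 2 := by
    have h := Real.integral_rpow_mul_exp_neg_mul_Ioi (a := 1) one_pos
      (r := 1/2) (by norm_num)
    rw [show ((1:ℝ)-1) = 0 by norm_num] at h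
    calc (∫ t in Ioi (0:ℝ), Real.exp (-(1/2 : ℝ) * t))
        = ∫ t in Ioi (0:ℝ), t ^ (0:ℝ) * Real.exp (-((1/2 : ℝ) * t)) := by
          refine setIntegral_congr_fun measurableSet_Ioi fun t ht => ?_
          rw [Real.rpow_zero, one_mul]
          ring_nf
      _ = (1 / (1/2 : ℝ)) ^ (1:ℝ) * Real.Gamma 1 := h
      _ = 2 := by norm_num [Real.Gamma_one]
  calc Real.Gamma (x + 1) = ∫ t in Ioi (0:ℝ), t ^ x * Real.exp (-t) :=
        Gamma_eq_int x (by linarith)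
    _ ≤ ∫ t in Ioi (0:ℝ), (2 * x) ^ x * Real.exp (-x) * Real.exp (-(1/2) * t) := by
        refine setIntegral_mono_on (integrableOn_pow_exp (by linarith)) ?_
          measurableSet_Ioi key
        exact ((exp_neg_integrableOn_Ioi 0 (by norm_num : (0:ℝ) < 1/2)).const_mul _)
    _ = (2 * x) ^ x * Real.exp (-x) * ∫ t in Ioi (0:ℝ), Real.exp (-(1/2) * t) :=
        integral_const_mul _ _
    _ = 2 * ((2 * x) ^ x * Real.exp (-x)) := by rw [hint]; ring

/-- Leading-order asymptotics: `log g_λ(x) / (x log x) → −1` as `x → ∞`. -/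
theorem log_gFun_leading_asymptotic (lam : ℝ) (hlam : 0 < lam) :
    Tendsto (fun x : ℝ => Real.log (gFun lam x) / (x * Real.log x)) atTop (nhds (-1)) := by
  -- abbreviation
  set D : ℝ → ℝ := fun x => x * Real.log x with hD
  have hDtop : Tendsto D atTop atTop :=
    Tendsto.atTop_mul_atTop₀ tendsto_id Real.tendsto_log_atTop
  have hDpos : ∀ᶠ x : ℝ in atTop, 0 < D x := hDtop.eventually_gt_atTop 0
  have hconst : ∀ c : ℝ, Tendsto (fun x => c / D x) atTop (nhds 0) := fun c =>
    Tendsto.div_atTop tendsto_const_nhds hDtop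
  have hlin : Tendsto (fun x : ℝ => x / D x) atTop (nhds 0) := by
    have heq : (fun x : ℝ => x / D x) =ᶠ[atTop] fun x => (Real.log x)⁻¹ := by
      filter_upwards [eventually_gt_atTop 0] with x hx
      rw [hD]
      rw [div_mul_cancel_left₀ hx.ne']
    exact Tendsto.congr' heq.symm Real.tendsto_log_atTop.inv_tendsto_atTop
  have hx1 : Tendsto (fun x : ℝ => (x + 1) / D x) atTop (nhds 0) := by
    have := hlin.add (hconst 1)
    simp only [add_zero] at this
    refine this.congr fun x => ?_
    rw [← add_div]
  have hlog1 : Tendsto (fun x : ℝ => Real.log (x + 1) / D x) atTop (nhds 0) := by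
    refine tendsto_of_tendsto_of_tendsto_of_le_of_le' tendsto_const_nhds hx1 ?_ ?_
    · filter_upwards [hDpos, eventually_ge_atTop (0:ℝ)] with x hdx hx
      exact div_nonneg (Real.log_nonneg (by linarith)) hdx.le
    · filter_upwards [hDpos, eventually_ge_atTop (0:ℝ)] with x hdx hx
      have : Real.log (x + 1) ≤ x + 1 := by
        have := Real.log_le_sub_one_of_pos (show (0:ℝ) < x + 1 by linarith)
        linarith
      exact div_le_div_of_nonneg_right this hdx.le |>.trans_eq rfl
  have hone : Tendsto (fun x : ℝ => D x / D x) atTop (nhds 1) := by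
    refine Tendsto.congr' ?_ tendsto_const_nhds
    filter_upwards [hDpos] with x hdx
    rw [div_self hdx.ne']
  -- bounding functions
  set U : ℝ → ℝ := fun x =>
    Real.log lam * ((x + 1) / D x) - Real.log (x + 1) / D x - D x / D x + (x + 1) / D x
    with hU
  set L : ℝ → ℝ := fun x =>
    (-lam) / D x + Real.log lam * ((x + 1) / D x) - Real.log (x + 1) / D x
      - Real.log 2 / D x - Real.log 2 * (x / D x) - D x / D x + x / D x with hL
  have hUt : Tendsto U atTop (nhds (-1)) := by
    have := (((hx1.const_mul (Real.log lam)).sub hlog1).sub hone).add hx1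
    simpa using this
  have hLt : Tendsto L atTop (nhds (-1)) := by
    have := ((((((hconst (-lam)).add (hx1.const_mul (Real.log lam))).sub hlog1).sub
      (hconst (Real.log 2))).sub (hlin.const_mul (Real.log 2))).sub hone).add hlin
    simpa using this
  refine tendsto_of_tendsto_of_tendsto_of_le_of_le' hLt hUt ?_ ?_
  · filter_upwards [eventually_ge_atTop (2:ℝ), hDpos] with x hx2 hdx
    have hxpos : (0:ℝ) < x := by linarith
    have hx1pos : (0:ℝ) < x + 1 := by linarith
    have hΓpos := Real.Gamma_pos_of_pos hx1pos
    have hIlo := le_I lam x hx1pos hlam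
    have hIhi := I_le lam x hx1pos hlam
    have hIpos : 0 < ∫ t in Set.Ioc (0:ℝ) lam, t ^ x * Real.exp (-t) := by
      refine lt_of_lt_of_le ?_ hIlo
      have := Real.rpow_pos_of_pos hlam (x + 1)
      positivity
    have hlogg : Real.log (gFun lam x)
        = Real.log (∫ t in Set.Ioc (0:ℝ) lam, t ^ x * Real.exp (-t))
          - Real.log (Real.Gamma (x + 1)) := by
      rw [gFun_eq lam x hx1pos hlam, Real.log_div hIpos.ne' hΓpos.ne']
    -- lower bounds
    have hlogI : -lam + (x + 1) * Real.log lam - Real.log (x + 1)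
        ≤ Real.log (∫ t in Set.Ioc (0:ℝ) lam, t ^ x * Real.exp (-t)) := by
      have h1 : Real.exp (-lam) * (lam ^ (x + 1) / (x + 1)) > 0 := by
        have := Real.rpow_pos_of_pos hlam (x + 1); positivity
      have h2 := Real.log_le_log h1 hIlo
      rw [Real.log_mul (Real.exp_pos _).ne' (by positivity), Real.log_exp,
        Real.log_div (Real.rpow_pos_of_pos hlam (x+1)).ne' hx1pos.ne',
        Real.log_rpow hlam] at h2
      linarith
    have hlogΓ : Real.log (Real.Gamma (x + 1))
        ≤ Real.log 2 + Real.log 2 * x + x * Real.log x - x := by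
      have h1 := Real.log_le_log hΓpos (Gamma_upper x hxpos)
      have h2x : (0:ℝ) < 2 * x := by linarith
      rw [Real.log_mul two_ne_zero (by positivity),
        Real.log_mul (Real.rpow_pos_of_pos h2x x).ne' (Real.exp_pos _).ne',
        Real.log_exp, Real.log_rpow h2x, Real.log_mul two_ne_zero hxpos.ne'] at h1
      nlinarith
    have key : L x * D x ≤ Real.log (gFun lam x) := by
      have hLx : L x * D x = -lam + (x + 1) * Real.log lam - Real.log (x + 1)
          - (Real.log 2 + Real.log 2 * x + x * Real.log x - x) := by
        rw [hL]
        field_simp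
        ring
      rw [hLx, hlogg]
      linarith
    calc L x = L x * D x / D x := by rw [mul_div_cancel_right₀ _ hdx.ne']
      _ ≤ Real.log (gFun lam x) / D x := div_le_div_of_nonneg_right key hdx.le
  · filter_upwards [eventually_ge_atTop (2:ℝ), hDpos] with x hx2 hdx
    have hxpos : (0:ℝ) < x := by linarith
    have hx1pos : (0:ℝ) < x + 1 := by linarith
    have hΓpos := Real.Gamma_pos_of_pos hx1pos
    have hIlo := le_I lam x hx1pos hlam
    have hIhi := I_le lam x hx1pos hlam
    have hIpos : 0 < ∫ t in Set.Ioc (0:ℝ) lam, t ^ x * Real.exp (-t) := by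
      refine lt_of_lt_of_le ?_ hIlo
      have := Real.rpow_pos_of_pos hlam (x + 1)
      positivity
    have hlogg : Real.log (gFun lam x)
        = Real.log (∫ t in Set.Ioc (0:ℝ) lam, t ^ x * Real.exp (-t))
          - Real.log (Real.Gamma (x + 1)) := by
      rw [gFun_eq lam x hx1pos hlam, Real.log_div hIpos.ne' hΓpos.ne']
    have hlogI : Real.log (∫ t in Set.Ioc (0:ℝ) lam, t ^ x * Real.exp (-t))
        ≤ (x + 1) * Real.log lam - Real.log (x + 1) := by
      have h2 := Real.log_le_log hIpos hIhi
      rw [Real.log_div (Real.rpow_pos_of_pos hlam (x+1)).ne' hx1pos.ne',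
        Real.log_rpow hlam] at h2
      linarith
    have hlogΓ : x * Real.log x - (x + 1) ≤ Real.log (Real.Gamma (x + 1)) := by
      have h0 : (0:ℝ) < x ^ x * Real.exp (-(x + 1)) := by
        have := Real.rpow_pos_of_pos hxpos x; positivity
      have h1 := Real.log_le_log h0 (Gamma_lower x hxpos)
      rw [Real.log_mul (Real.rpow_pos_of_pos hxpos x).ne' (Real.exp_pos _).ne',
        Real.log_exp, Real.log_rpow hxpos] at h1
      linarith
    have key : Real.log (gFun lam x) ≤ U x * D x := by
      have hUx : U x * D x = (x + 1) * Real.log lam - Real.log (x + 1)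
          - (x * Real.log x - (x + 1)) := by
        rw [hU]
        field_simp
        ring
      rw [hUx, hlogg]
      linarith
    calc Real.log (gFun lam x) / D x ≤ U x * D x / D x :=
          div_le_div_of_nonneg_right key hdx.le
      _ = U x := by rw [mul_div_cancel_right₀ _ hdx.ne']
end

section
/- (Focussing / Anderson's theorem) Let M_n be the maximum of n independent Poisson(λ) random variables, λ > 0 fixed. Then there exists a sequence of integers I_n such that Pr[M_n ∈ {I_n, I_n + 1}] → 1 as n → ∞. -/
open MeasureTheory ProbabilityTheory Real Filter

noncomputable def pfn (lam : ℝ) (j : ℕ) : ℝ := Real.exp (-lam) * lam ^ j / (Nat.factorial j)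

noncomputable def ptail (lam : ℝ) (k : ℕ) : ℝ := ∑' j, pfn lam (j + k)

lemma sqrt_tendsto_atTop' : Filter.Tendsto Real.sqrt atTop atTop := by
  rw [tendsto_atTop_atTop]
  intro b
  refine ⟨max 0 (b^2), fun a ha => ?_⟩
  have hb : b^2 ≤ a := le_trans (le_max_right _ _) ha
  calc b ≤ |b| := le_abs_self b
    _ = Real.sqrt (b^2) := (Real.sqrt_sq_eq_abs b).symm
    _ ≤ Real.sqrt a := Real.sqrt_le_sqrt hb

lemma summable_pfn (lam : ℝ) : Summable (pfn lam) := by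
  have := (Real.summable_pow_div_factorial lam).mul_left (Real.exp (-lam))
  convert this using 2 with j
  exacts [rfl, by simp [pfn, mul_div_assoc]]

lemma pfn_pos {lam : ℝ} (h : 0 < lam) (j : ℕ) : 0 < pfn lam j := by
  unfold pfn
  positivity

lemma ptail_pos {lam : ℝ} (h : 0 < lam) (k : ℕ) : 0 < ptail lam k := by
  have hs : Summable fun j => pfn lam (j + k) := (summable_nat_add_iff k).2 (summable_pfn lam)
  exact Summable.tsum_pos hs (fun j => (pfn_pos h _).le) 0 (pfn_pos h _)

lemma ptail_succ (lam : ℝ) (k : ℕ) : ptail lam k = pfn lam k + ptail lam (k + 1) := by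
  have hs : Summable fun j => pfn lam (j + k) := (summable_nat_add_iff k).2 (summable_pfn lam)
  have := Summable.tsum_eq_zero_add hs
  simp only [zero_add] at this
  rw [ptail, this, ptail]
  congr 1
  apply tsum_congr
  intro j
  congr 1
  omega

lemma ptail_anti {lam : ℝ} (h : 0 < lam) : ∀ {k l : ℕ}, k ≤ l → ptail lam l ≤ ptail lam k := by
  have step : ∀ k, ptail lam (k+1) ≤ ptail lam k := fun k => by
    rw [ptail_succ lam k]; nlinarith [pfn_pos h k]
  intro k l hkl
  induction l with
  | zero => simp_all
  | succ m ih =>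
    rcases Nat.lt_or_ge k (m+1) with h1 | h1
    · exact (step m).trans (ih (by omega))
    · have : k = m + 1 := by omega
      simp [this]

lemma ptail_tendsto (lam : ℝ) : Tendsto (ptail lam) atTop (nhds 0) :=
  _root_.tendsto_sum_nat_add (pfn lam)

-- geometric bound: for 2*lam ≤ k, ptail lam k ≤ 2 * pfn lam k
lemma ptail_le_two_pfn {lam : ℝ} (h : 0 < lam) {k : ℕ} (hk : 2 * lam ≤ k) :
    ptail lam k ≤ 2 * pfn lam k := by
  have hbd : ∀ j, pfn lam (j + k) ≤ pfn lam k * (1/2) ^ j := by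
    intro j
    induction j with
    | zero => simp
    | succ m ih =>
      have hstep : pfn lam (m + 1 + k) ≤ pfn lam (m + k) * (1/2) := by
        have : pfn lam (m + 1 + k) = pfn lam (m + k) * (lam / (m + k + 1)) := by
          have hre : m + 1 + k = (m + k) + 1 := by omega
          rw [hre]
          unfold pfn
          rw [Nat.factorial_succ]
          push_cast
          field_simp
          ring
        rw [this]
        have hpos := pfn_pos h (m + k)
        have hle : lam / ((m:ℝ) + k + 1) ≤ 1/2 := by
          rw [div_le_div_iff₀ (by positivity) (by norm_num)]
          have : (k:ℝ) ≥ 2 * lam := hk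
          have : (m:ℝ) ≥ 0 := Nat.cast_nonneg m
          linarith
        nlinarith
      calc pfn lam (m + 1 + k) ≤ pfn lam (m + k) * (1/2) := hstep
        _ ≤ pfn lam k * (1/2) ^ m * (1/2) := by nlinarith
        _ = pfn lam k * (1/2) ^ (m+1) := by ring
  have hs : Summable fun j => pfn lam (j + k) := (summable_nat_add_iff k).2 (summable_pfn lam)
  have hs2 : Summable fun j : ℕ => pfn lam k * (1/2) ^ j :=
    (summable_geometric_of_lt_one (by norm_num) (by norm_num)).mul_left _
  have := Summable.tsum_le_tsum hbd hs hs2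
  rw [ptail]
  refine this.trans ?_
  rw [tsum_mul_left, tsum_geometric_of_lt_one (by norm_num) (by norm_num)]
  norm_num
  nlinarith [pfn_pos h k]

lemma ptail_ratio {lam : ℝ} (h : 0 < lam) {k : ℕ} (hk : 2 * lam ≤ (k:ℝ) + 1) :
    ptail lam (k + 1) ≤ (2 * lam / (k + 1)) * ptail lam k := by
  have h1 : ptail lam (k+1) ≤ 2 * pfn lam (k+1) := ptail_le_two_pfn h (by push_cast; linarith)
  have h2 : pfn lam (k+1) = pfn lam k * (lam / (k + 1)) := by
    unfold pfn
    rw [Nat.factorial_succ]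
    push_cast
    field_simp
    ring
  have h3 : pfn lam k ≤ ptail lam k := by
    rw [ptail_succ lam k]; nlinarith [ptail_pos h (k+1)]
  have hkpos : (0:ℝ) < (k:ℝ) + 1 := by positivity
  rw [h2] at h1
  refine h1.trans ?_
  have he : 2 * (pfn lam k * (lam / ((k:ℝ) + 1))) = 2 * lam / ((k:ℝ)+1) * pfn lam k := by
    field_simp
  rw [he]
  gcongr

lemma aux_total {Ω : Type*} [MeasurableSpace Ω] (μ : MeasureTheory.Measure Ω)
    [MeasureTheory.IsProbabilityMeasure μ]
    (X0 : Ω → ℕ) (lam : ℝ) (hMeas : Measurable X0)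
    (hX : ∀ j : ℕ, (μ {ω | X0 ω = j}).toReal = pfn lam j) :
    ∑' j, pfn lam j = 1 := by
  have hmeasset : ∀ j : ℕ, MeasurableSet {ω | X0 ω = j} := fun j =>
    hMeas (measurableSet_singleton j)
  have hdisj : Pairwise (Function.onFun Disjoint fun j : ℕ => {ω | X0 ω = j}) := by
    intro i j hij
    simp only [Function.onFun, Set.disjoint_left]
    rintro ω hi hj
    exact hij (hi.symm.trans hj)
  have hunion : (⋃ j : ℕ, {ω | X0 ω = j}) = Set.univ := by
    ext ω; simp
  have h1 : ∑' j : ℕ, μ {ω | X0 ω = j} = 1 := by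
    rw [← MeasureTheory.measure_iUnion hdisj hmeasset, hunion, MeasureTheory.measure_univ]
  have h2 : (∑' j : ℕ, μ {ω | X0 ω = j}).toReal = ∑' j : ℕ, (μ {ω | X0 ω = j}).toReal :=
    ENNReal.tsum_toReal_eq (fun j => MeasureTheory.measure_ne_top μ _)
  rw [h1] at h2
  simp only [ENNReal.toReal_one] at h2
  rw [← h2.symm]
  exact tsum_congr fun j => (hX j).symm

lemma aux_cdf {Ω : Type*} [MeasurableSpace Ω] (μ : MeasureTheory.Measure Ω)
    [MeasureTheory.IsProbabilityMeasure μ]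
    (X0 : Ω → ℕ) (lam : ℝ) (hMeas : Measurable X0)
    (hX : ∀ j : ℕ, (μ {ω | X0 ω = j}).toReal = pfn lam j)
    (htot : ∑' j, pfn lam j = 1) (k : ℕ) :
    (μ {ω | X0 ω ≤ k}).toReal = 1 - ptail lam (k + 1) := by
  have hset : {ω | X0 ω ≤ k} = ⋃ j ∈ Finset.range (k+1), {ω | X0 ω = j} := by
    ext ω; simp [Nat.lt_succ_iff]
  have hmeasset : ∀ j : ℕ, MeasurableSet {ω | X0 ω = j} := fun j =>
    hMeas (measurableSet_singleton j)
  have hdisj : ∀ i ∈ Finset.range (k+1), ∀ j ∈ Finset.range (k+1), i ≠ j →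
      Disjoint {ω | X0 ω = i} {ω | X0 ω = j} := by
    intro i _ j _ hij
    simp only [Set.disjoint_left]
    rintro ω hi hj
    exact hij (hi.symm.trans hj)
  have h1 : μ {ω | X0 ω ≤ k} = ∑ j ∈ Finset.range (k+1), μ {ω | X0 ω = j} := by
    rw [hset]
    exact MeasureTheory.measure_biUnion_finset hdisj (fun j _ => hmeasset j)
  rw [h1, ENNReal.toReal_sum (fun j _ => MeasureTheory.measure_ne_top μ _)]
  have h2 : ∑ j ∈ Finset.range (k+1), (μ {ω | X0 ω = j}).toReal
      = ∑ j ∈ Finset.range (k+1), pfn lam j := Finset.sum_congr rfl (fun j _ => hX j)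
  rw [h2]
  have h3 := Summable.sum_add_tsum_nat_add (f := pfn lam) (k+1) (summable_pfn lam)
  rw [htot] at h3
  have : ptail lam (k+1) = ∑' j, pfn lam (j + (k+1)) := rfl
  linarith [h3]

lemma aux_prod {Ω : Type*} [MeasurableSpace Ω] (μ : MeasureTheory.Measure Ω)
    [MeasureTheory.IsProbabilityMeasure μ]
    (X : ℕ → Ω → ℕ)
    (hIndep : ProbabilityTheory.iIndepFun X μ)
    (M : ℕ → Ω → ℕ)
    (hM : ∀ n ω, M n ω = (Finset.range n).sup (fun i => X i ω)) (n k : ℕ) :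
    μ {ω | M n ω ≤ k} = ∏ i ∈ Finset.range n, μ {ω | X i ω ≤ k} := by
  have hset : {ω | M n ω ≤ k} = ⋂ i ∈ Finset.range n, X i ⁻¹' (Set.Iic k) := by
    ext ω
    simp [hM, Finset.sup_le_iff]
  rw [hset]
  have h := hIndep.measure_inter_preimage_eq_mul (Finset.range n)
    (sets := fun _ => Set.Iic k) (fun i _ => measurableSet_Iic)
  rw [h]
  rfl

set_option maxHeartbeats 1000000 in
/-- (Anderson) The maximum `M_n` of `n` i.i.d. Poisson(λ) random variables concentrates on
two consecutive integers: there exist integers `I_n` with `Pr[M_n ∈ {I_n, I_n+1}] → 1`. -/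
theorem poisson_max_focussing
    {Ω : Type*} [MeasurableSpace Ω] (μ : Measure Ω) [IsProbabilityMeasure μ]
    (X : ℕ → Ω → ℕ) (lam : ℝ) (hlam : 0 < lam)
    (hIndep : iIndepFun X μ)
    (hX : ∀ i, ∀ j : ℕ,
      (μ {ω | X i ω = j}).toReal = Real.exp (-lam) * lam ^ j / (Nat.factorial j))
    (hMeas : ∀ i, Measurable (X i))
    (M : ℕ → Ω → ℕ)
    (hM : ∀ n ω, M n ω = (Finset.range n).sup (fun i => X i ω)) :
    ∃ I : ℕ → ℕ,
      Tendsto (fun n => (μ {ω | M n ω = I n ∨ M n ω = I n + 1}).toReal)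
        atTop (nhds 1) := by
  classical
  set p : ℕ → ℝ := fun k => ptail lam (k + 1) with hp_def
  have htot : ∑' j, pfn lam j = 1 := aux_total μ (X 0) lam (hMeas 0) (hX 0)
  have hcdf : ∀ i k, (μ {ω | X i ω ≤ k}).toReal = 1 - p k :=
    fun i k => aux_cdf μ (X i) lam (hMeas i) (hX i) htot k
  -- measure of the max CDF
  have hmaxCDF : ∀ n k, (μ {ω | M n ω ≤ k}).toReal = (1 - p k) ^ n := by
    intro n k
    rw [aux_prod μ X hIndep M hM n k, ENNReal.toReal_prod]
    rw [Finset.prod_congr rfl (fun i _ => hcdf i k), Finset.prod_const, Finset.card_range]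
  have hp_pos : ∀ k, 0 < p k := fun k => ptail_pos hlam _
  have hp_le_one : ∀ k, p k ≤ 1 := by
    intro k
    have h := hcdf 0 k
    have : 0 ≤ (μ {ω | X 0 ω ≤ k}).toReal := ENNReal.toReal_nonneg
    linarith
  have hp_anti : ∀ {k l : ℕ}, k ≤ l → p l ≤ p k := fun {k l} h =>
    ptail_anti hlam (by omega)
  have hp0 : Tendsto p atTop (nhds 0) := by
    have := (ptail_tendsto lam).comp (tendsto_add_atTop_nat 1)
    exact this
  -- the focussing index
  have hex : ∀ n : ℕ, ∃ k, (n:ℝ)^2 * (p k * p (k+1)) ≤ 1 := by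
    intro n
    have hev : ∀ᶠ k in atTop, p k < 1/((n:ℝ)^2+1) := by
      apply hp0.eventually_lt_const
      positivity
    obtain ⟨k, hk⟩ := hev.exists
    refine ⟨k, ?_⟩
    have h1 : 0 < p k := hp_pos k
    have h2 : p (k+1) ≤ 1 := hp_le_one (k+1)
    have h3 : 0 < p (k+1) := hp_pos (k+1)
    have hn : (0:ℝ) ≤ (n:ℝ)^2 := by positivity
    have : p k * p (k+1) ≤ p k := by nlinarith
    have h5 : (n:ℝ)^2 * (p k * p (k+1)) ≤ (n:ℝ)^2 * p k := by nlinarith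
    have h6 : (n:ℝ)^2 * p k ≤ (n:ℝ)^2 * (1/((n:ℝ)^2+1)) :=
      mul_le_mul_of_nonneg_left hk.le hn
    have h7 : (n:ℝ)^2 * (1/((n:ℝ)^2+1)) ≤ 1 := by
      rw [mul_one_div, div_le_one (by positivity)]; linarith
    linarith
  set I : ℕ → ℕ := fun n => Nat.find (hex n) with hI_def
  have hIspec : ∀ n : ℕ, (n:ℝ)^2 * (p (I n) * p (I n + 1)) ≤ 1 := fun n => Nat.find_spec (hex n)
  have hImin : ∀ n m, m < I n → ¬ ((n:ℝ)^2 * (p m * p (m+1)) ≤ 1) :=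
    fun n m h => Nat.find_min (hex n) h
  -- I n → ∞
  have hItop : Tendsto I atTop atTop := by
    rw [tendsto_atTop]
    intro K
    have hc : 0 < p K * p (K+1) := mul_pos (hp_pos K) (hp_pos (K+1))
    have ht : Tendsto (fun n : ℕ => (n:ℝ) * (p K * p (K+1))) atTop atTop :=
      Tendsto.atTop_mul_const hc tendsto_natCast_atTop_atTop
    have hev : ∀ᶠ n : ℕ in atTop, 1 < (n:ℝ) * (p K * p (K+1)) := ht.eventually_gt_atTop 1
    filter_upwards [hev, eventually_ge_atTop 1] with n hn hn1
    rw [hI_def]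
    rw [Nat.le_find_iff]
    intro m hm hle
    have h1 : p K ≤ p m := hp_anti (by omega)
    have h2 : p (K+1) ≤ p (m+1) := hp_anti (by omega)
    have hn1' : (1:ℝ) ≤ (n:ℝ) := by exact_mod_cast hn1
    have hsq : (n:ℝ) ≤ (n:ℝ)^2 := by nlinarith
    have hprod : p K * p (K+1) ≤ p m * p (m+1) :=
      mul_le_mul h1 h2 (hp_pos (K+1)).le (hp_pos m).le
    have hc2 : (0:ℝ) < p m * p (m+1) := mul_pos (hp_pos m) (hp_pos (m+1))
    have hs1 : (n:ℝ) * (p K * p (K+1)) ≤ (n:ℝ) * (p m * p (m+1)) :=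
      mul_le_mul_of_nonneg_left hprod (by positivity)
    have hs2 : (n:ℝ) * (p m * p (m+1)) ≤ (n:ℝ)^2 * (p m * p (m+1)) :=
      mul_le_mul_of_nonneg_right hsq hc2.le
    linarith
  -- measurability of CDF events
  have hmeasM : ∀ n k, MeasurableSet {ω | M n ω ≤ k} := by
    intro n k
    have hset : {ω | M n ω ≤ k} = ⋂ i ∈ Finset.range n, X i ⁻¹' (Set.Iic k) := by
      ext ω
      simp [hM, Finset.sup_le_iff]
    rw [hset]
    exact Finset.measurableSet_biInter _ (fun i _ => (hMeas i) measurableSet_Iic)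
  -- the probability formula
  have hprob : ∀ n, 1 ≤ I n →
      (μ {ω | M n ω = I n ∨ M n ω = I n + 1}).toReal
        = (1 - p (I n + 1)) ^ n - (1 - p (I n - 1)) ^ n := by
    intro n hIn1
    have hsetd : {ω | M n ω = I n ∨ M n ω = I n + 1}
        = {ω | M n ω ≤ I n + 1} \ {ω | M n ω ≤ I n - 1} := by
      ext ω
      simp only [Set.mem_setOf_eq, Set.mem_diff]
      omega
    have hBA : {ω | M n ω ≤ I n - 1} ⊆ {ω | M n ω ≤ I n + 1} := by
      intro ω h
      simp only [Set.mem_setOf_eq] at *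
      omega
    rw [hsetd, measure_diff hBA (hmeasM n (I n - 1)).nullMeasurableSet (measure_ne_top μ _),
      ENNReal.toReal_sub_of_le (measure_mono hBA) (measure_ne_top μ _),
      hmaxCDF, hmaxCDF]
  -- eventual lower bound
  set g : ℕ → ℝ := fun k =>
    1 - Real.sqrt (2*lam/((k:ℝ)+2)) - Real.exp (-Real.sqrt (((k:ℝ)+1)/(2*lam))) with hg_def
  have hlow : ∀ n, 1 ≤ I n → 2 * lam ≤ (I n : ℝ) →
      g (I n) ≤ (μ {ω | M n ω = I n ∨ M n ω = I n + 1}).toReal := by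
    intro n h1 h2
    rw [hprob n h1]
    set k := I n with hk_def
    set a := p (k+1) with ha_def
    set b := p (k-1) with hb_def
    have hapos : 0 < a := hp_pos _
    have hbpos : 0 < b := hp_pos _
    have hale : a ≤ 1 := hp_le_one _
    have hble : b ≤ 1 := hp_le_one _
    have hk1 : 2 * lam ≤ (k:ℝ) + 1 := by linarith
    have hk2 : 2 * lam ≤ ((k:ℝ) + 1) + 1 := by linarith
    have hkpos : (0:ℝ) < (k:ℝ) + 1 := by positivity
    -- ratio bounds
    have hratio1 : a ≤ (2*lam/((k:ℝ)+2)) * p k := by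
      have h := ptail_ratio hlam (k := k+1) (by push_cast; linarith)
      have e1 : ptail lam (k+1+1) = a := by simp [ha_def, hp_def]
      have e2 : ptail lam (k+1) = p k := rfl
      rw [e1, e2] at h
      convert h using 3
      push_cast
      ring
    have hratio2 : ((k:ℝ)+1) * p k ≤ 2*lam * b := by
      have h := ptail_ratio hlam (k := k) hk1
      have e1 : ptail lam (k+1) = p k := rfl
      have e2 : ptail lam k = b := by
        simp only [hb_def, hp_def]
        congr 1
        omega
      rw [e1, e2] at h
      calc ((k:ℝ)+1) * p k ≤ ((k:ℝ)+1) * ((2*lam/((k:ℝ)+1)) * b) := by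
            apply mul_le_mul_of_nonneg_left h hkpos.le
        _ = 2*lam * b := by field_simp
    -- the find conditions
    have hfind : (n:ℝ)^2 * (p k * a) ≤ 1 := hIspec n
    have hfindb : 1 < (n:ℝ)^2 * (b * p k) := by
      have h := hImin n (k-1) (by omega)
      have e : k - 1 + 1 = k := by omega
      rw [e] at h
      push_neg at h
      exact h
    -- bound 1 : n * a ≤ sqrt (2 lam / (k+2))
    have hna : (n:ℝ) * a ≤ Real.sqrt (2*lam/((k:ℝ)+2)) := by
      rw [Real.le_sqrt (by positivity) (by positivity)]
      have e3 : (n:ℝ)^2 * (p k * a) * (2*lam/((k:ℝ)+2)) ≤ 2*lam/((k:ℝ)+2) := by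
        have hpos : (0:ℝ) ≤ 2*lam/((k:ℝ)+2) := by positivity
        nlinarith
      nlinarith [mul_le_mul_of_nonneg_left hratio1
        (by positivity : (0:ℝ) ≤ (n:ℝ)^2 * a), hfind,
        mul_nonneg (mul_nonneg (sq_nonneg (n:ℝ)) hapos.le)
          (by positivity : (0:ℝ) ≤ 2*lam/((k:ℝ)+2))]
    have bound1 : 1 - Real.sqrt (2*lam/((k:ℝ)+2)) ≤ (1 - a)^n := by
      have h := one_add_mul_le_pow (a := -a) (by linarith) n
      have he : (1:ℝ) + -a = 1 - a := by ring
      rw [he] at h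
      linarith
    -- bound 2 : sqrt ((k+1)/(2 lam)) ≤ n * b
    have key : ((k:ℝ)+1) < 2*lam*((n:ℝ)*b)^2 := by
      nlinarith [mul_lt_mul_of_pos_left hfindb hkpos,
        mul_le_mul_of_nonneg_left hratio2
          (by positivity : (0:ℝ) ≤ (n:ℝ)^2 * b)]
    have hnb : Real.sqrt (((k:ℝ)+1)/(2*lam)) ≤ (n:ℝ) * b := by
      have hdl : ((k:ℝ)+1)/(2*lam) ≤ ((n:ℝ)*b)^2 := by
        rw [div_le_iff₀ (by positivity)]
        nlinarith
      calc Real.sqrt (((k:ℝ)+1)/(2*lam)) ≤ Real.sqrt (((n:ℝ)*b)^2) :=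
            Real.sqrt_le_sqrt hdl
        _ = (n:ℝ) * b := Real.sqrt_sq (by positivity)
    have bound2 : (1 - b)^n ≤ Real.exp (-Real.sqrt (((k:ℝ)+1)/(2*lam))) := by
      have hb1 : 1 - b ≤ Real.exp (-b) := by
        have := Real.add_one_le_exp (-b)
        linarith
      have h0b : (0:ℝ) ≤ 1 - b := by linarith
      calc (1 - b)^n ≤ (Real.exp (-b))^n := pow_le_pow_left₀ h0b hb1 n
        _ = Real.exp ((n:ℝ) * (-b)) := by rw [← Real.exp_nat_mul]
        _ ≤ Real.exp (-Real.sqrt (((k:ℝ)+1)/(2*lam))) := by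
            apply Real.exp_le_exp.2
            linarith
    simp only [hg_def]
    linarith
  refine ⟨I, ?_⟩
  have hup : ∀ n, (μ {ω | M n ω = I n ∨ M n ω = I n + 1}).toReal ≤ 1 := by
    intro n
    have h : μ {ω | M n ω = I n ∨ M n ω = I n + 1} ≤ 1 := prob_le_one
    calc (μ {ω | M n ω = I n ∨ M n ω = I n + 1}).toReal
        ≤ (1 : ENNReal).toReal := ENNReal.toReal_mono ENNReal.one_ne_top h
      _ = 1 := by simp
  have hg1 : Tendsto g atTop (nhds 1) := by
    have t1 : Tendsto (fun k : ℕ => 2*lam/((k:ℝ)+2)) atTop (nhds 0) :=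
      Tendsto.div_atTop tendsto_const_nhds
        (tendsto_atTop_add_const_right atTop 2 tendsto_natCast_atTop_atTop)
    have t1' : Tendsto (fun k : ℕ => Real.sqrt (2*lam/((k:ℝ)+2))) atTop (nhds 0) := by
      have h := t1.sqrt
      simpa using h
    have t2 : Tendsto (fun k : ℕ => ((k:ℝ)+1)/(2*lam)) atTop atTop :=
      Tendsto.atTop_div_const (by positivity)
        (tendsto_atTop_add_const_right atTop 1 tendsto_natCast_atTop_atTop)
    have t2' : Tendsto (fun k : ℕ => Real.exp (-Real.sqrt (((k:ℝ)+1)/(2*lam))))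
        atTop (nhds 0) :=
      Real.tendsto_exp_atBot.comp
        (tendsto_neg_atTop_atBot.comp (sqrt_tendsto_atTop'.comp t2))
    have h := (tendsto_const_nhds (x := (1:ℝ)) (f := atTop)).sub t1' |>.sub t2'
    simpa [hg_def] using h
  have hgI : Tendsto (fun n => g (I n)) atTop (nhds 1) := hg1.comp hItop
  have hev : ∀ᶠ n in atTop,
      g (I n) ≤ (μ {ω | M n ω = I n ∨ M n ω = I n + 1}).toReal := by
    have hKev : ∀ᶠ n in atTop, max 1 ⌈2*lam⌉₊ ≤ I n := hItop.eventually_ge_atTop _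
    filter_upwards [hKev] with n hn
    have h1 : 1 ≤ I n := le_trans (le_max_left _ _) hn
    have h2 : 2*lam ≤ (I n : ℝ) := by
      have hc := le_trans (le_max_right _ _) hn
      calc 2*lam ≤ (⌈2*lam⌉₊ : ℝ) := Nat.le_ceil _
        _ ≤ (I n : ℝ) := by exact_mod_cast hc
    exact hlow n h1 h2
  exact tendsto_of_tendsto_of_tendsto_of_le_of_le' hgI tendsto_const_nhds hev
    (Eventually.of_forall hup)
end

section
/- Let M_n be the maximum of n i.i.d. Poisson(λ) random variables, λ > 0 fixed. Then M_n / (log n / log log n) → 1 in probability as n → ∞. -/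
open MeasureTheory ProbabilityTheory Real Filter


lemma auxL : Tendsto (fun n : ℕ => Real.log (Real.log n)) atTop atTop :=
  Real.tendsto_log_atTop.comp (Real.tendsto_log_atTop.comp tendsto_natCast_atTop_atTop)

lemma auxLogDiv : Tendsto (fun x : ℝ => Real.log x / x) atTop (nhds 0) :=
  Real.isLittleO_log_id_atTop.tendsto_div_nhds_zero

lemma aux_upper (lam δ : ℝ) (hlam : 0 < lam) (hδ : 0 < δ) (k : ℕ → ℕ)
    (hk : ∀ᶠ n : ℕ in atTop, (1+δ) * (Real.log n / Real.log (Real.log n)) ≤ k n) :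
    Tendsto (fun n : ℕ => (n:ℝ) * lam ^ (k n) / (Nat.factorial (k n))) atTop (nhds 0) := by
  have hL : Tendsto (fun n : ℕ => Real.log (Real.log n)) atTop atTop := auxL
  have hg : Tendsto (fun n : ℕ =>
      (Real.log (Real.log (Real.log n)) + (1 + Real.log lam)) / Real.log (Real.log n))
      atTop (nhds 0) := by
    have h1 : Tendsto (fun n : ℕ => Real.log (Real.log (Real.log n)) / Real.log (Real.log n))
        atTop (nhds 0) := auxLogDiv.comp hL
    have h2 : Tendsto (fun n : ℕ => (1 + Real.log lam) / Real.log (Real.log n))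
        atTop (nhds 0) := tendsto_const_nhds.div_atTop hL
    simpa [add_div] using h1.add h2
  have hexp : Tendsto (fun n : ℕ => Real.exp (-(δ/2) * Real.log n)) atTop (nhds 0) := by
    have : Tendsto (fun n : ℕ => -(δ/2) * Real.log n) atTop atBot := by
      apply Tendsto.const_mul_atTop_of_neg (by linarith : -(δ/2) < 0)
      exact Real.tendsto_log_atTop.comp tendsto_natCast_atTop_atTop
    exact Real.tendsto_exp_atBot.comp this
  have hbound : ∀ᶠ n : ℕ in atTop,
      (n:ℝ) * lam ^ (k n) / (Nat.factorial (k n)) ≤ Real.exp (-(δ/2) * Real.log n) := by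
    have hev1 : ∀ᶠ n : ℕ in atTop, (1:ℝ) ≤ Real.log (Real.log n) := hL.eventually_ge_atTop 1
    have hev2 : ∀ᶠ n : ℕ in atTop,
        (Real.log (Real.log (Real.log n)) + (1 + Real.log lam)) / Real.log (Real.log n)
          ≤ δ / (2 * (1+δ)) :=
      hg.eventually_le_const (show (0:ℝ) < δ / (2*(1+δ)) by positivity)
    have hev4 : ∀ᶠ n : ℕ in atTop, 1 ≤ n := eventually_ge_atTop 1
    filter_upwards [hk, hev1, hev2, hev4] with n hkn hL1 hsmall hn1
    set ℓ := Real.log n with hldef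
    set L := Real.log (Real.log n) with hLdef
    have hLpos : (0:ℝ) < L := by linarith
    have hl0 : (0:ℝ) ≤ ℓ := Real.log_nonneg (by exact_mod_cast hn1)
    have hlpos : (1:ℝ) < ℓ := by
      by_contra h
      push_neg at h
      have : L ≤ 0 := Real.log_nonpos hl0 h
      linarith
    have hkpos : 0 < k n := by
      rcases Nat.eq_zero_or_pos (k n) with h0 | h
      · exfalso; rw [h0] at hkn; push_cast at hkn
        nlinarith [div_pos (by linarith : (0:ℝ) < ℓ) hLpos]
      · exact h
    have hkR : (0:ℝ) < (k n : ℝ) := by exact_mod_cast hkpos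
    have hfac : ((k n : ℝ))^(k n) / (Nat.factorial (k n)) ≤ Real.exp (k n) :=
      Real.pow_div_factorial_le_exp _ (le_of_lt hkR) (k n)
    have hfacpos : (0:ℝ) < (Nat.factorial (k n)) := by exact_mod_cast (k n).factorial_pos
    have hinv : (1:ℝ) / (Nat.factorial (k n)) ≤ Real.exp (k n) / ((k n:ℝ))^(k n) := by
      rw [div_le_div_iff₀ hfacpos (by positivity), one_mul]
      calc ((k n:ℝ))^(k n) = ((k n : ℝ))^(k n) / (Nat.factorial (k n)) * (Nat.factorial (k n)) := by
            field_simp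
        _ ≤ Real.exp (k n) * (Nat.factorial (k n)) :=
            mul_le_mul_of_nonneg_right hfac (le_of_lt hfacpos)
    have step1 : (n:ℝ) * lam ^ (k n) / (Nat.factorial (k n)) ≤
        Real.exp (ℓ + (k n) * (Real.log lam + 1) - (k n) * Real.log (k n)) := by
      have hnR : (0:ℝ) < n := by exact_mod_cast hn1
      have e1 : (n:ℝ) = Real.exp ℓ := by rw [hldef, Real.exp_log hnR]
      have e2 : lam ^ (k n) = Real.exp ((k n) * Real.log lam) := by
        calc lam ^ (k n) = Real.exp (Real.log lam) ^ (k n) := by rw [Real.exp_log hlam]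
          _ = Real.exp ((k n) * Real.log lam) := (Real.exp_nat_mul _ _).symm
      have e3 : ((k n:ℝ))^(k n) = Real.exp ((k n) * Real.log (k n)) := by
        calc ((k n:ℝ))^(k n) = Real.exp (Real.log (k n)) ^ (k n) := by rw [Real.exp_log hkR]
          _ = Real.exp ((k n) * Real.log (k n)) := (Real.exp_nat_mul _ _).symm
      calc (n:ℝ) * lam ^ (k n) / (Nat.factorial (k n))
          = (n:ℝ) * lam ^ (k n) * (1 / (Nat.factorial (k n))) := by ring
        _ ≤ (n:ℝ) * lam ^ (k n) * (Real.exp (k n) / ((k n:ℝ))^(k n)) := by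
            apply mul_le_mul_of_nonneg_left hinv; positivity
        _ = Real.exp (ℓ + (k n) * (Real.log lam + 1) - (k n) * Real.log (k n)) := by
            rw [e1, e2, e3, ← Real.exp_sub, ← Real.exp_add, ← Real.exp_add]
            ring_nf
    refine le_trans step1 (Real.exp_le_exp.mpr ?_)
    have hadL : (1+δ) * (ℓ / L) ≤ (k n : ℝ) := hkn
    have hdivnn : (0:ℝ) ≤ ℓ / L := by positivity
    have hlogk : L - Real.log L ≤ Real.log (k n) := by
      have h1 : Real.log ((1+δ) * (ℓ / L)) ≤ Real.log (k n) :=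
        Real.log_le_log (by positivity) hadL
      have h2 : Real.log (ℓ / L) ≤ Real.log ((1+δ) * (ℓ / L)) := by
        apply Real.log_le_log (div_pos (by linarith) hLpos)
        nlinarith [div_pos (by linarith : (0:ℝ) < ℓ) hLpos]
      have h3 : Real.log (ℓ / L) = Real.log ℓ - Real.log L :=
        Real.log_div (by linarith) (ne_of_gt hLpos)
      rw [h3] at h2
      have h4 : Real.log ℓ = L := rfl
      rw [h4] at h2
      linarith
    have hc : Real.log L + (1 + Real.log lam) ≤ δ / (2*(1+δ)) * L := by
      rw [div_le_iff₀ hLpos] at hsmall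
      linarith
    have hfrac : δ/(2*(1+δ)) ≤ 1 := by
      rw [div_le_one (by linarith)]; linarith
    have hB : (0:ℝ) ≤ L - (Real.log L + (1 + Real.log lam)) := by
      nlinarith [mul_le_mul_of_nonneg_right hfrac (le_of_lt hLpos)]
    have h5 : (1+δ) * (ℓ / L) * (L - (Real.log L + (1 + Real.log lam))) ≤
        (k n : ℝ) * (L - (Real.log L + (1 + Real.log lam))) :=
      mul_le_mul_of_nonneg_right hadL hB
    have h4 : (k n : ℝ) * (L - (Real.log L + (1 + Real.log lam))) ≤
        (k n : ℝ) * Real.log (k n) - (k n) * (Real.log lam + 1) := by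
      nlinarith [mul_le_mul_of_nonneg_left hlogk (le_of_lt hkR)]
    have hLL : ℓ / L * L = ℓ := div_mul_cancel₀ ℓ (ne_of_gt hLpos)
    have hc2 : (ℓ/L) * (Real.log L + (1 + Real.log lam)) ≤ (ℓ/L) * (δ/(2*(1+δ)) * L) :=
      mul_le_mul_of_nonneg_left hc hdivnn
    have hee : (1+δ) * ((ℓ/L) * (δ/(2*(1+δ)) * L)) = δ/2 * ℓ := by
      field_simp
    have hstep : (1+δ) * ((ℓ/L) * (Real.log L + (1 + Real.log lam))) ≤
        (1+δ) * ((ℓ/L)*(δ/(2*(1+δ))*L)) := mul_le_mul_of_nonneg_left hc2 (by linarith)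
    have hprod : (1+δ/2) * ℓ ≤ (1+δ) * (ℓ / L) * (L - (Real.log L + (1 + Real.log lam))) := by
      calc (1+δ/2)*ℓ = (1+δ)*ℓ - δ/2*ℓ := by ring
        _ = (1+δ)*((ℓ/L)*L) - (1+δ)*((ℓ/L)*(δ/(2*(1+δ))*L)) := by rw [hLL, hee]
        _ ≤ (1+δ)*((ℓ/L)*L) - (1+δ)*((ℓ/L)*(Real.log L + (1 + Real.log lam))) := by linarith
        _ = (1+δ)*(ℓ/L)*(L - (Real.log L + (1 + Real.log lam))) := by ring
    linarith
  apply tendsto_of_tendsto_of_tendsto_of_le_of_le' tendsto_const_nhds hexp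
  · filter_upwards with n; positivity
  · exact hbound


lemma auxL' : Tendsto (fun n : ℕ => Real.log (Real.log n)) atTop atTop :=
  Real.tendsto_log_atTop.comp (Real.tendsto_log_atTop.comp tendsto_natCast_atTop_atTop)

lemma auxl' : Tendsto (fun n : ℕ => Real.log n) atTop atTop :=
  Real.tendsto_log_atTop.comp tendsto_natCast_atTop_atTop

lemma aux_lower (lam δ : ℝ) (hlam : 0 < lam) (hδ : 0 < δ) (hδ1 : δ ≤ 1/2) (m : ℕ → ℕ)
    (hm : ∀ᶠ n : ℕ in atTop, (m n : ℝ) ≤ (1-δ) * (Real.log n / Real.log (Real.log n))) :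
    Tendsto (fun n : ℕ =>
      (n:ℝ) * (Real.exp (-lam) * lam ^ (m n + 1) / (Nat.factorial (m n + 1))))
      atTop atTop := by
  set C := 1 + |Real.log lam| with hCdef
  have hC0 : 0 ≤ C := by positivity
  have hlogC : -Real.log lam ≤ C := by
    have := abs_nonneg (Real.log lam)
    have := neg_abs_le (Real.log lam)
    simp only [hCdef]
    linarith
  have hgrow : Tendsto (fun n : ℕ => Real.exp (δ/4 * Real.log n)) atTop atTop :=
    Real.tendsto_exp_atTop.comp (auxl'.const_mul_atTop (by linarith))
  apply tendsto_atTop_mono' atTop _ hgrow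
  rw [Filter.EventuallyLE]
  -- eventual facts
  have hev1 : ∀ᶠ n : ℕ in atTop, (2:ℝ) ≤ Real.log (Real.log n) := auxL'.eventually_ge_atTop 2
  have hev2 : ∀ᶠ n : ℕ in atTop, C / Real.log (Real.log n) ≤ δ/4 := by
    have : Tendsto (fun n : ℕ => C / Real.log (Real.log n)) atTop (nhds 0) :=
      tendsto_const_nhds.div_atTop auxL'
    exact this.eventually_le_const (by positivity)
  have hev3 : ∀ᶠ n : ℕ in atTop, Real.log (Real.log n) / Real.log n ≤ δ/8 := by
    have : Tendsto (fun n : ℕ => Real.log (Real.log n) / Real.log n) atTop (nhds 0) :=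
      Real.isLittleO_log_id_atTop.tendsto_div_nhds_zero.comp auxl'
    exact this.eventually_le_const (by positivity)
  have hev4 : ∀ᶠ n : ℕ in atTop, (lam + C) * (8/δ) ≤ Real.log n := auxl'.eventually_ge_atTop _
  have hev5 : ∀ᶠ n : ℕ in atTop, 1 ≤ n := eventually_ge_atTop 1
  filter_upwards [hm, hev1, hev2, hev3, hev4, hev5] with n hmn hL2 hCL hLl hlamC hn1
  set ℓ := Real.log n with hldef
  set L := Real.log (Real.log n) with hLdef
  set q := m n + 1 with hqdef
  have hLpos : (0:ℝ) < L := by linarith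
  have hl0 : (0:ℝ) ≤ ℓ := Real.log_nonneg (by exact_mod_cast hn1)
  have hlpos : (0:ℝ) < ℓ := by
    by_contra h
    push_neg at h
    have h0 : ℓ = 0 := le_antisymm h hl0
    rw [show L = Real.log ℓ from rfl, h0, Real.log_zero] at hLpos
    exact lt_irrefl _ hLpos
  have hlne : ℓ ≠ 0 := ne_of_gt hlpos
  have hlge : L + 1 ≤ ℓ := by
    have := Real.log_le_sub_one_of_pos hlpos
    rw [hldef] at this ⊢
    linarith
  have hqR : (0:ℝ) < (q:ℝ) := by positivity
  have hqle : (q:ℝ) ≤ (1-δ) * (ℓ / L) + 1 := by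
    push_cast [hqdef]
    linarith
  have hdivnn : (0:ℝ) ≤ ℓ / L := by positivity
  -- log q ≤ L
  have hqleℓ : (q:ℝ) ≤ ℓ := by
    have h1 : ℓ / L ≤ ℓ / 2 := by
      apply div_le_div_of_nonneg_left hl0 (by norm_num) hL2
    nlinarith
  have hlogq : Real.log q ≤ L := by
    calc Real.log q ≤ Real.log ℓ := Real.log_le_log hqR hqleℓ
      _ = L := rfl
  -- main exponent bound F ≥ δ/4 * ℓ
  have hqbound : (q:ℝ) * (Real.log q - Real.log lam) ≤ ((1-δ) * (ℓ/L) + 1) * (L + C) := by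
    have h1 : Real.log q - Real.log lam ≤ L + C := by linarith
    have h2 : (0:ℝ) ≤ L + C := by linarith
    have h3 : (q:ℝ) * (Real.log q - Real.log lam) ≤ (q:ℝ) * (L + C) :=
      mul_le_mul_of_nonneg_left h1 (le_of_lt hqR)
    exact h3.trans (mul_le_mul_of_nonneg_right hqle h2)
  have hLL : ℓ / L * L = ℓ := div_mul_cancel₀ ℓ (ne_of_gt hLpos)
  have hexpand : ((1-δ) * (ℓ/L) + 1) * (L + C) ≤ (1-δ)*ℓ + (δ/4)*ℓ + L + C := by
    have hCL' : C ≤ δ/4 * L := by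
      rw [div_le_iff₀ hLpos] at hCL
      linarith
    have hc2 : (ℓ/L) * C ≤ (δ/4) * ℓ := by
      calc (ℓ/L)*C ≤ (ℓ/L)*(δ/4*L) := mul_le_mul_of_nonneg_left hCL' hdivnn
        _ = δ/4 * (ℓ/L*L) := by ring
        _ = δ/4*ℓ := by rw [hLL]
    have hc3 : (1-δ)*((ℓ/L)*C) ≤ (ℓ/L)*C := by
      nlinarith [mul_nonneg hdivnn hC0]
    calc ((1-δ)*(ℓ/L)+1)*(L+C) = (1-δ)*((ℓ/L)*L) + (1-δ)*((ℓ/L)*C) + L + C := by ring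
      _ = (1-δ)*ℓ + (1-δ)*((ℓ/L)*C) + L + C := by rw [hLL]
      _ ≤ (1-δ)*ℓ + (δ/4)*ℓ + L + C := by linarith
  have hF : δ/4 * ℓ ≤ ℓ - lam + (q * Real.log lam - q * Real.log q) := by
    have hLsmall : L ≤ (δ/8) * ℓ := by
      have := mul_le_mul_of_nonneg_right hLl (le_of_lt hlpos)
      rw [div_mul_cancel₀ _ hlne] at this
      linarith
    have hlamCsmall : lam + C ≤ (δ/8) * ℓ := by
      have h1 : (lam + C) * (8/δ) * (δ/8) = lam + C := by field_simp
      have h2 := mul_le_mul_of_nonneg_right hlamC (by positivity : (0:ℝ) ≤ δ/8)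
      nlinarith
    linarith [hqbound, hexpand, hLsmall, mul_nonneg (le_of_lt hδ) hl0]
  -- from exponent bound to the quantity
  have hfac : ((Nat.factorial q : ℝ)) ≤ (q:ℝ)^q := by
    exact_mod_cast Nat.factorial_le_pow q
  have hfacpos : (0:ℝ) < (Nat.factorial q : ℝ) := by exact_mod_cast q.factorial_pos
  have heq : Real.exp (ℓ - lam + (q * Real.log lam - q * Real.log q)) =
      (n:ℝ) * (Real.exp (-lam) * lam ^ q / (q:ℝ)^q) := by
    have hnR : (0:ℝ) < n := by exact_mod_cast hn1
    have e1 : (n:ℝ) = Real.exp ℓ := by rw [hldef, Real.exp_log hnR]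
    have e2 : lam ^ q = Real.exp ((q:ℝ) * Real.log lam) := by
      calc lam ^ q = Real.exp (Real.log lam) ^ q := by rw [Real.exp_log hlam]
        _ = Real.exp ((q:ℝ) * Real.log lam) := (Real.exp_nat_mul _ _).symm
    have e3 : ((q:ℝ))^q = Real.exp ((q:ℝ) * Real.log q) := by
      calc ((q:ℝ))^q = Real.exp (Real.log q) ^ q := by rw [Real.exp_log hqR]
        _ = Real.exp ((q:ℝ) * Real.log q) := (Real.exp_nat_mul _ _).symm
    rw [e1, e2, e3, ← Real.exp_add, ← Real.exp_sub, ← Real.exp_add]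
    exact congrArg Real.exp (by ring)
  calc Real.exp (δ/4 * ℓ) ≤ Real.exp (ℓ - lam + (q * Real.log lam - q * Real.log q)) :=
        Real.exp_le_exp.mpr hF
    _ = (n:ℝ) * (Real.exp (-lam) * lam ^ q / (q:ℝ)^q) := heq
    _ ≤ (n:ℝ) * (Real.exp (-lam) * lam ^ q / (Nat.factorial q)) := by
        apply mul_le_mul_of_nonneg_left _ (by positivity)
        apply div_le_div_of_nonneg_left (by positivity) hfacpos hfac


lemma pmf_ofReal {Ω : Type*} [MeasurableSpace Ω] (μ : Measure Ω) [IsProbabilityMeasure μ]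
    (X : Ω → ℕ) (lam : ℝ)
    (hX : ∀ j : ℕ, (μ {ω | X ω = j}).toReal = Real.exp (-lam) * lam ^ j / (Nat.factorial j)) :
    ∀ j : ℕ, μ {ω | X ω = j} = ENNReal.ofReal (Real.exp (-lam) * lam ^ j / (Nat.factorial j)) := by
  intro j
  rw [← hX j, ENNReal.ofReal_toReal (measure_ne_top μ _)]

lemma tail_bound {Ω : Type*} [MeasurableSpace Ω] (μ : Measure Ω) [IsProbabilityMeasure μ]
    (X : Ω → ℕ) (lam : ℝ) (hlam : 0 < lam) (hMeas : Measurable X)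
    (hpmf : ∀ j : ℕ, μ {ω | X ω = j}
      = ENNReal.ofReal (Real.exp (-lam) * lam ^ j / (Nat.factorial j))) (k0 : ℕ) :
    μ {ω | k0 ≤ X ω} ≤ ENNReal.ofReal (lam ^ k0 / (Nat.factorial k0)) := by
  have hmeasset : ∀ j : ℕ, MeasurableSet {ω | X ω = j} := fun j =>
    hMeas (MeasurableSet.singleton j)
  have hsub : {ω | k0 ≤ X ω} = ⋃ j : ℕ, {ω | X ω = k0 + j} := by
    ext ω
    simp only [Set.mem_setOf_eq, Set.mem_iUnion]
    constructor
    · intro h; exact ⟨X ω - k0, by omega⟩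
    · rintro ⟨j, hj⟩; omega
  have htsum1 : ∑' j : ℕ, μ {ω | X ω = j} = 1 := by
    have hunion : (⋃ j : ℕ, {ω | X ω = j}) = Set.univ := by
      ext ω; simp
    have hdisj : Pairwise (Function.onFun Disjoint fun j => {ω | X ω = j}) := by
      intro a b hab
      simp only [Function.onFun, Set.disjoint_left]
      intro ω ha hb
      exact hab (ha ▸ hb ▸ rfl)
    rw [← measure_iUnion hdisj hmeasset, hunion, measure_univ]
  calc μ {ω | k0 ≤ X ω} = μ (⋃ j : ℕ, {ω | X ω = k0 + j}) := by rw [hsub]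
    _ ≤ ∑' j : ℕ, μ {ω | X ω = k0 + j} := measure_iUnion_le _
    _ ≤ ∑' j : ℕ, ENNReal.ofReal (lam ^ k0 / (Nat.factorial k0)) * μ {ω | X ω = j} := by
        apply ENNReal.tsum_le_tsum
        intro j
        rw [hpmf (k0 + j), hpmf j, ← ENNReal.ofReal_mul (by positivity)]
        apply ENNReal.ofReal_le_ofReal
        have hfle : (Nat.factorial k0 : ℝ) * (Nat.factorial j) ≤ (Nat.factorial (k0 + j)) := by
          exact_mod_cast Nat.le_of_dvd (Nat.factorial_pos _)
            (Nat.factorial_mul_factorial_dvd_factorial_add k0 j)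
        have hf1 : (0:ℝ) < (Nat.factorial k0 : ℝ) := by exact_mod_cast k0.factorial_pos
        have hf2 : (0:ℝ) < (Nat.factorial j : ℝ) := by exact_mod_cast j.factorial_pos
        have hf3 : (0:ℝ) < (Nat.factorial (k0+j) : ℝ) := by exact_mod_cast (k0+j).factorial_pos
        rw [pow_add]
        have key : (1:ℝ) / (Nat.factorial (k0+j)) ≤
            1 / ((Nat.factorial k0 : ℝ) * (Nat.factorial j)) := by
          apply one_div_le_one_div_of_le (by positivity) hfle
        calc Real.exp (-lam) * (lam ^ k0 * lam ^ j) / (Nat.factorial (k0+j))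
            = Real.exp (-lam) * (lam ^ k0 * lam ^ j) * (1 / (Nat.factorial (k0+j))) := by ring
          _ ≤ Real.exp (-lam) * (lam ^ k0 * lam ^ j) *
              (1 / ((Nat.factorial k0 : ℝ) * (Nat.factorial j))) := by
              apply mul_le_mul_of_nonneg_left key (by positivity)
          _ = lam ^ k0 / (Nat.factorial k0) * (Real.exp (-lam) * lam ^ j / (Nat.factorial j)) := by
              field_simp
    _ = ENNReal.ofReal (lam ^ k0 / (Nat.factorial k0)) * ∑' j : ℕ, μ {ω | X ω = j} :=
        ENNReal.tsum_mul_left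
    _ = ENNReal.ofReal (lam ^ k0 / (Nat.factorial k0)) := by rw [htsum1, mul_one]

lemma cdf_bound {Ω : Type*} [MeasurableSpace Ω] (μ : Measure Ω) [IsProbabilityMeasure μ]
    (X : Ω → ℕ) (lam : ℝ) (hlam : 0 < lam) (hMeas : Measurable X)
    (hpmf : ∀ j : ℕ, μ {ω | X ω = j}
      = ENNReal.ofReal (Real.exp (-lam) * lam ^ j / (Nat.factorial j))) (m0 : ℕ) :
    (μ {ω | X ω ≤ m0}).toReal ≤
      1 - Real.exp (-lam) * lam ^ (m0+1) / (Nat.factorial (m0+1)) := by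
  have hdisj : Disjoint {ω | X ω ≤ m0} {ω | X ω = m0 + 1} := by
    rw [Set.disjoint_left]
    intro ω h1 h2
    simp only [Set.mem_setOf_eq] at h1 h2
    omega
  have hmeas2 : MeasurableSet {ω | X ω = m0 + 1} := hMeas (MeasurableSet.singleton _)
  have hun : μ {ω | X ω ≤ m0} + μ {ω | X ω = m0 + 1} ≤ 1 := by
    rw [← measure_union hdisj hmeas2]
    exact prob_le_one
  have h1 := ENNReal.toReal_mono (by norm_num) hun
  rw [ENNReal.toReal_add (measure_ne_top μ _) (measure_ne_top μ _)] at h1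
  have h2 : (μ {ω | X ω = m0 + 1}).toReal = Real.exp (-lam) * lam ^ (m0+1) / (Nat.factorial (m0+1)) := by
    rw [hpmf (m0+1)]
    rw [ENNReal.toReal_ofReal (by positivity)]
  rw [ENNReal.toReal_one] at h1
  linarith


/-- `M_n / (log n / log log n) → 1` in probability, where `M_n` is the maximum of `n`
i.i.d. Poisson(λ) random variables. -/
theorem poisson_max_in_probability
    {Ω : Type*} [MeasurableSpace Ω] (μ : Measure Ω) [IsProbabilityMeasure μ]
    (X : ℕ → Ω → ℕ) (lam : ℝ) (hlam : 0 < lam)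
    (hIndep : iIndepFun X μ)
    (hX : ∀ i, ∀ j : ℕ,
      (μ {ω | X i ω = j}).toReal = Real.exp (-lam) * lam ^ j / (Nat.factorial j))
    (hMeas : ∀ i, Measurable (X i))
    (M : ℕ → Ω → ℕ)
    (hM : ∀ n ω, M n ω = (Finset.range n).sup (fun i => X i ω)) :
    ∀ δ : ℝ, 0 < δ →
      Tendsto
        (fun n : ℕ =>
          (μ {ω | δ < |(M n ω : ℝ) * Real.log (Real.log n) / Real.log n - 1|}).toReal)
        atTop (nhds 0) := by
  intro δ hδ
  set ε := min δ (1/2) with hεdef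
  have hε : 0 < ε := lt_min hδ (by norm_num)
  have hε2 : ε ≤ 1/2 := min_le_right _ _
  have hεδ : ε ≤ δ := min_le_left _ _
  set k : ℕ → ℕ := fun n => ⌊(1+ε) * (Real.log n / Real.log (Real.log n))⌋₊ + 1 with hkdef
  set m : ℕ → ℕ := fun n => ⌊(1-ε) * (Real.log n / Real.log (Real.log n))⌋₊ with hmdef
  have hpmf : ∀ i, ∀ j : ℕ, μ {ω | X i ω = j}
      = ENNReal.ofReal (Real.exp (-lam) * lam ^ j / (Nat.factorial j)) :=
    fun i => pmf_ofReal μ (X i) lam (hX i)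
  have hku : ∀ᶠ n : ℕ in atTop,
      (1+ε) * (Real.log n / Real.log (Real.log n)) ≤ k n := by
    filter_upwards with n
    have := Nat.lt_floor_add_one ((1+ε) * (Real.log n / Real.log (Real.log n)))
    simp only [hkdef]
    push_cast
    linarith
  have hmu : ∀ᶠ n : ℕ in atTop,
      (m n : ℝ) ≤ (1-ε) * (Real.log n / Real.log (Real.log n)) := by
    filter_upwards [auxL.eventually_ge_atTop 1, eventually_ge_atTop 1] with n hL1 hn1
    have hl0 : (0:ℝ) ≤ Real.log n := Real.log_nonneg (by exact_mod_cast hn1)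
    apply Nat.floor_le
    apply mul_nonneg (by linarith)
    exact div_nonneg hl0 (by linarith)
  have hupper := aux_upper lam ε hlam hε k hku
  have hlowerT := aux_lower lam ε hlam hε hε2 m hmu
  have hlower : Tendsto (fun n : ℕ => Real.exp
      (-((n:ℝ) * (Real.exp (-lam) * lam ^ (m n + 1) / (Nat.factorial (m n + 1))))))
      atTop (nhds 0) :=
    Real.tendsto_exp_atBot.comp (tendsto_neg_atTop_atBot.comp hlowerT)
  have hsum0 : Tendsto (fun n : ℕ =>
      (n:ℝ) * lam ^ (k n) / (Nat.factorial (k n)) + Real.exp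
        (-((n:ℝ) * (Real.exp (-lam) * lam ^ (m n + 1) / (Nat.factorial (m n + 1))))))
      atTop (nhds 0) := by
    simpa using hupper.add hlower
  apply tendsto_of_tendsto_of_tendsto_of_le_of_le' tendsto_const_nhds hsum0
  · filter_upwards with n
    exact ENNReal.toReal_nonneg
  · filter_upwards [auxL.eventually_ge_atTop 1, eventually_ge_atTop 1] with n hL1 hn1
    set ℓ := Real.log n with hldef
    set L := Real.log (Real.log n) with hLdef
    have hLpos : (0:ℝ) < L := by linarith
    have hl0 : (0:ℝ) ≤ ℓ := Real.log_nonneg (by exact_mod_cast hn1)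
    have hlpos : (0:ℝ) < ℓ := by
      rcases lt_or_eq_of_le hl0 with h | h
      · exact h
      · exfalso
        rw [show L = Real.log ℓ from rfl, ← h, Real.log_zero] at hLpos
        exact lt_irrefl _ hLpos
    -- event inclusion
    have hEsub : {ω | δ < |(M n ω : ℝ) * L / ℓ - 1|} ⊆
        {ω | k n ≤ M n ω} ∪ {ω | M n ω ≤ m n} := by
      intro ω hω
      simp only [Set.mem_setOf_eq] at hω
      have hεlt : ε < |(M n ω : ℝ) * L / ℓ - 1| := lt_of_le_of_lt hεδ hω
      set x := (M n ω : ℝ) with hxdef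
      rw [lt_abs] at hεlt
      rcases hεlt with h | h
      · left
        have h1 : (1+ε) * ℓ < x * L := by
          have h2 : 1 + ε < x * L / ℓ := by linarith
          rw [lt_div_iff₀ hlpos] at h2
          linarith
        have h2 : (1+ε) * (ℓ/L) < x := by
          rw [← mul_div_assoc, div_lt_iff₀ hLpos]
          linarith
        have h3 : (⌊(1+ε) * (ℓ/L)⌋₊ : ℝ) < x :=
          lt_of_le_of_lt (Nat.floor_le (by positivity)) h2
        rw [hxdef] at h3
        have h4 : ⌊(1+ε) * (ℓ/L)⌋₊ < M n ω := by exact_mod_cast h3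
        exact Nat.succ_le_of_lt h4
      · right
        have h1 : x * L < (1-ε) * ℓ := by
          have h2 : x * L / ℓ < 1 - ε := by linarith
          rw [div_lt_iff₀ hlpos] at h2
          linarith
        have h2 : x < (1-ε) * (ℓ/L) := by
          rw [← mul_div_assoc, lt_div_iff₀ hLpos]
          linarith
        rw [hxdef] at h2
        exact Nat.le_floor (le_of_lt h2)
      
    -- upper part
    have hkpos : 0 < k n := Nat.succ_pos _
    have hA : (μ {ω | k n ≤ M n ω}).toReal ≤ (n:ℝ) * lam ^ (k n) / (Nat.factorial (k n)) := by
      have hAsub : {ω | k n ≤ M n ω} = ⋃ i ∈ Finset.range n, {ω | k n ≤ X i ω} := by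
        ext ω
        simp only [Set.mem_setOf_eq, Set.mem_iUnion, hM]
        constructor
        · intro hsup
          by_contra hcon
          push_neg at hcon
          have : (Finset.range n).sup (fun i => X i ω) < k n :=
            Finset.sup_lt_iff (by exact hkpos) |>.mpr (fun i hi => by
              have := hcon i hi
              omega)
          omega
        · rintro ⟨i, hi, hXi⟩
          exact le_trans hXi (Finset.le_sup (f := fun i => X i ω) hi)
      have hAle : μ {ω | k n ≤ M n ω} ≤
          ENNReal.ofReal ((n:ℝ) * (lam ^ (k n) / (Nat.factorial (k n)))) := by
        rw [hAsub]
        refine le_trans (measure_biUnion_finset_le _ _) ?_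
        have hstep : ∑ i ∈ Finset.range n, μ {ω | k n ≤ X i ω} ≤
            ∑ _i ∈ Finset.range n, ENNReal.ofReal (lam ^ (k n) / (Nat.factorial (k n))) :=
          Finset.sum_le_sum (fun i _ => tail_bound μ (X i) lam hlam (hMeas i) (hpmf i) (k n))
        refine le_trans hstep (le_of_eq ?_)
        rw [Finset.sum_const, Finset.card_range, nsmul_eq_mul,
          ENNReal.ofReal_mul (by positivity), ENNReal.ofReal_natCast]
      have := ENNReal.toReal_le_of_le_ofReal (by positivity) hAle
      linarith [this, (mul_div_assoc (n:ℝ) (lam ^ (k n)) ((Nat.factorial (k n)):ℝ))]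
    -- lower part
    have hB : (μ {ω | M n ω ≤ m n}).toReal ≤ Real.exp
        (-((n:ℝ) * (Real.exp (-lam) * lam ^ (m n + 1) / (Nat.factorial (m n + 1))))) := by
      set p := Real.exp (-lam) * lam ^ (m n + 1) / (Nat.factorial (m n + 1)) with hpdef
      have hp0 : 0 ≤ p := by positivity
      have hBsub : {ω | M n ω ≤ m n} = ⋂ i ∈ Finset.range n, {ω | X i ω ≤ m n} := by
        ext ω
        simp only [Set.mem_setOf_eq, Set.mem_iInter, hM, Finset.sup_le_iff]
      have hprod : μ {ω | M n ω ≤ m n} = ∏ i ∈ Finset.range n, μ {ω | X i ω ≤ m n} := by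
        rw [hBsub]
        exact hIndep.meas_biInter (fun i _ => ⟨Set.Iic (m n), trivial, rfl⟩)
      have hfact : ∀ i, (μ {ω | X i ω ≤ m n}).toReal ≤ 1 - p :=
        fun i => cdf_bound μ (X i) lam hlam (hMeas i) (hpmf i) (m n)
      have hq0 : 0 ≤ 1 - p := le_trans ENNReal.toReal_nonneg (hfact 0)
      calc (μ {ω | M n ω ≤ m n}).toReal
          = ∏ i ∈ Finset.range n, (μ {ω | X i ω ≤ m n}).toReal := by
            rw [hprod, ENNReal.toReal_prod]
        _ ≤ ∏ _i ∈ Finset.range n, (1 - p) := by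
            apply Finset.prod_le_prod (fun i _ => ENNReal.toReal_nonneg)
              (fun i _ => hfact i)
        _ = (1 - p) ^ n := by rw [Finset.prod_const, Finset.card_range]
        _ ≤ (Real.exp (-p)) ^ n := by
            apply pow_le_pow_left₀ hq0
            linarith [Real.add_one_le_exp (-p)]
        _ = Real.exp (-((n:ℝ) * p)) := by
            rw [← Real.exp_nat_mul]
            congr 1
            ring
    -- assemble
    have h1 : μ {ω | δ < |(M n ω : ℝ) * L / ℓ - 1|} ≤
        μ {ω | k n ≤ M n ω} + μ {ω | M n ω ≤ m n} :=
      (measure_mono hEsub).trans (measure_union_le _ _)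
    have h2 : (μ {ω | δ < |(M n ω : ℝ) * L / ℓ - 1|}).toReal ≤
        (μ {ω | k n ≤ M n ω}).toReal + (μ {ω | M n ω ≤ m n}).toReal := by
      rw [← ENNReal.toReal_add (measure_ne_top μ _) (measure_ne_top μ _)]
      exact ENNReal.toReal_mono
        (ENNReal.add_ne_top.mpr ⟨measure_ne_top μ _, measure_ne_top μ _⟩) h1
    calc (μ {ω | δ < |(M n ω : ℝ) * L / ℓ - 1|}).toReal
        ≤ (μ {ω | k n ≤ M n ω}).toReal + (μ {ω | M n ω ≤ m n}).toReal := h2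
      _ ≤ (n:ℝ) * lam ^ (k n) / (Nat.factorial (k n)) + Real.exp
          (-((n:ℝ) * (Real.exp (-lam) * lam ^ (m n + 1) / (Nat.factorial (m n + 1))))) := by
          exact add_le_add hA hB
end
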